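/- arXiv:2104.02351 — 4 statements merged into one kernel-verified Lean document; each statement's English description precedes it below -/
import Mathlib

section
/- Let N ≥ 3 and let u : ℝ^N → ℝ^N be a smooth vector field on ℝ^N ∖ {0} such that x·u(x) = 0 and div u = 0 on ℝ^N ∖ {0}. Then u has zero spherical mean: for every r > 0, the vector-valued integral ∫_{S^{N-1}} u(rσ) dσ equals the zero vector. -/
open MeasureTheory Metric Filter

noncomputable section

/-- The divergence `div u = Σ_k ∂u_k/∂x_k` of a vector field on `ℝ^N`. -/
def divg {N : ℕ} (u : EuclideanSpace ℝ (Fin N) → EuclideanSpace ℝ (Fin N))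
    (x : EuclideanSpace ℝ (Fin N)) : ℝ :=
  ∑ k, fderiv ℝ (fun y => u y k) x (EuclideanSpace.single k 1)

/-- `|∇u|² = Σ_{j,k} (∂u_j/∂x_k)²`. -/
def gradSq {N : ℕ} (u : EuclideanSpace ℝ (Fin N) → EuclideanSpace ℝ (Fin N))
    (x : EuclideanSpace ℝ (Fin N)) : ℝ :=
  ∑ j, ∑ k, (fderiv ℝ (fun y => u y j) x (EuclideanSpace.single k 1)) ^ 2

/-- `u` has finite D-norm: the three integrals in the HUP inequality are finite. -/
def FiniteDNorm {N : ℕ} (u : EuclideanSpace ℝ (Fin N) → EuclideanSpace ℝ (Fin N)) : Prop :=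
  Integrable (fun x => ‖u x‖ ^ 2) volume ∧
    Integrable (fun x => ‖u x‖ ^ 2 * ‖x‖ ^ 2) volume ∧
    Integrable (fun x => gradSq u x) volume

/-- The standard surface measure on the unit sphere `S^{N-1} ⊂ ℝ^N`. -/
def sphereMeasure (N : ℕ) : Measure (sphere (0 : EuclideanSpace ℝ (Fin N)) 1) :=
  (volume : Measure (EuclideanSpace ℝ (Fin N))).toSphere


open Set
open scoped Pointwise


abbrev E (N : ℕ) := EuclideanSpace ℝ (Fin N)

/-- rotation by angle `t` in the `(i,l)` plane -/
def rotFun (i l : Fin N) (t : ℝ) (x : E N) : E N := WithLp.toLp 2 fun m =>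
  if m = i then Real.cos t * x i - Real.sin t * x l
  else if m = l then Real.sin t * x i + Real.cos t * x l
  else x m

variable {i l : Fin N}

lemma rotFun_add (hil : i ≠ l) (s t : ℝ) (x : E N) :
    rotFun i l s (rotFun i l t x) = rotFun i l (s + t) x := by
  ext m
  simp only [rotFun, PiLp.toLp_apply, hil, hil.symm, if_neg, if_pos, Real.cos_add, Real.sin_add]
  by_cases hmi : m = i
  · simp [hmi, hil, hil.symm]; ring
  · by_cases hml : m = l
    · simp [hml, hil, hil.symm]; ring
    · simp [hmi, hml]

lemma rotFun_zero (i l : Fin N) (x : E N) : rotFun i l 0 x = x := by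
  ext m
  simp only [rotFun, PiLp.toLp_apply, Real.cos_zero, Real.sin_zero]
  by_cases hmi : m = i
  · subst hmi; simp
  · by_cases hml : m = l
    · subst hml; simp [hmi]
    · simp [hmi, hml]

lemma sum_split (hil : i ≠ l) (f : Fin N → ℝ) :
    ∑ m, f m = f i + f l + ∑ m ∈ (Finset.univ.erase i).erase l, f m := by
  rw [← Finset.sum_erase_add _ _ (Finset.mem_univ i),
    ← Finset.sum_erase_add _ _ (Finset.mem_erase.2 ⟨hil.symm, Finset.mem_univ l⟩)]
  ring

lemma rotFun_norm (hil : i ≠ l) (t : ℝ) (x : E N) : ‖rotFun i l t x‖ = ‖x‖ := by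
  rw [EuclideanSpace.norm_eq, EuclideanSpace.norm_eq]
  congr 1
  rw [sum_split hil (fun m => ‖rotFun i l t x m‖ ^ 2), sum_split hil (fun m => ‖x m‖ ^ 2)]
  have h1 : ∀ m ∈ (Finset.univ.erase i).erase l,
      ‖rotFun i l t x m‖ ^ 2 = ‖x m‖ ^ 2 := by
    intro m hm
    simp only [Finset.mem_erase] at hm
    simp [rotFun, hm.1, hm.2.1]
  rw [Finset.sum_congr rfl h1]
  have := Real.sin_sq_add_cos_sq t
  simp only [rotFun, PiLp.toLp_apply, if_pos, hil.symm, if_neg, Real.norm_eq_abs, sq_abs]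
  simp only [if_false]
  nlinarith [Real.sin_sq_add_cos_sq t]

lemma rotFun_addmap (i l : Fin N) (t : ℝ) (x y : E N) :
    rotFun i l t (x + y) = rotFun i l t x + rotFun i l t y := by
  ext m
  by_cases hmi : m = i
  · simp [rotFun, hmi]; ring
  · by_cases hml : m = l
    · simp only [rotFun, PiLp.toLp_apply, hmi, hml, PiLp.add_apply, if_neg, if_pos]
      split_ifs <;> ring
    · simp [rotFun, hmi, hml]

lemma rotFun_smulmap (i l : Fin N) (t : ℝ) (c : ℝ) (x : E N) :
    rotFun i l t (c • x) = c • rotFun i l t x := by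
  ext m
  by_cases hmi : m = i
  · simp [rotFun, hmi, PiLp.smul_apply, smul_eq_mul]; ring
  · by_cases hml : m = l
    · simp only [rotFun, PiLp.toLp_apply, hmi, hml, PiLp.smul_apply, smul_eq_mul]
      split_ifs <;> ring
    · simp [rotFun, hmi, hml, PiLp.smul_apply]

/-- rotation in the `(i,l)` plane as a linear isometry equivalence -/
def rotEquiv (hil : i ≠ l) (t : ℝ) : E N ≃ₗᵢ[ℝ] E N where
  toFun := rotFun i l t
  invFun := rotFun i l (-t)
  map_add' := rotFun_addmap i l t
  map_smul' := rotFun_smulmap i l t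
  left_inv := fun x => by
    show rotFun i l (-t) (rotFun i l t x) = x
    rw [rotFun_add hil, neg_add_cancel, rotFun_zero]
  right_inv := fun x => by
    show rotFun i l t (rotFun i l (-t) x) = x
    rw [rotFun_add hil, add_neg_cancel, rotFun_zero]
  norm_map' := rotFun_norm hil t

lemma rotEquiv_apply (hil : i ≠ l) (t : ℝ) (x : E N) : rotEquiv hil t x = rotFun i l t x := rfl

section Invariance

variable {n : ℕ}

/-- the map induced on the unit sphere by a linear isometry equivalence -/
def sphereRot (O : E n ≃ₗᵢ[ℝ] E n) (σ : sphere (0 : E n) 1) : sphere (0 : E n) 1 :=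
  ⟨O σ, by
    rw [mem_sphere_zero_iff_norm, O.norm_map, ← mem_sphere_zero_iff_norm]
    exact σ.2⟩

lemma sphereRot_continuous (O : E n ≃ₗᵢ[ℝ] E n) : Continuous (sphereRot O) :=
  Continuous.subtype_mk (O.continuous.comp continuous_subtype_val) _

lemma smul_set_eq (s : Set (sphere (0 : E n) 1)) (r : Ioi (0:ℝ)) :
    Subtype.val '' ((homeomorphUnitSphereProd (E n)) ⁻¹' (s ×ˢ Iio r)) =
      Ioo (0:ℝ) (r : ℝ) • (Subtype.val '' s) := by
  rw [← Set.image2_smul, Set.image2_image_right, ← Homeomorph.image_symm, Set.image_image,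
    ← Set.image_subtype_val_Ioi_Iio, Set.image2_image_left, Set.image2_swap, ← Set.image_prod]
  rfl

lemma smul_set_measurable {s : Set (sphere (0 : E n) 1)} (hs : MeasurableSet s) :
    MeasurableSet (Ioo (0:ℝ) 1 • (Subtype.val '' s)) := by
  have h1 : Ioo (0:ℝ) 1 = Ioo (0:ℝ) ((⟨1, mem_Ioi.2 one_pos⟩ : Ioi (0:ℝ)) : ℝ) := rfl
  rw [h1, ← smul_set_eq s ⟨1, mem_Ioi.2 one_pos⟩]
  exact (MeasurableEmbedding.subtype_coe (measurableSet_singleton (0 : E n)).compl).measurableSet_image'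
    ((homeomorphUnitSphereProd (E n)).measurable (hs.prod measurableSet_Iio))

lemma map_sphereRot (O : E n ≃ₗᵢ[ℝ] E n) :
    Measure.map (sphereRot O) (volume : Measure (E n)).toSphere
      = (volume : Measure (E n)).toSphere := by
  refine Measure.ext fun s hs => ?_
  rw [Measure.map_apply (sphereRot_continuous O).measurable hs]
  rw [Measure.toSphere_apply' _ ((sphereRot_continuous O).measurable hs),
    Measure.toSphere_apply' _ hs]
  congr 1
  have hset : (Subtype.val '' (sphereRot O ⁻¹' s)) = ⇑O ⁻¹' (Subtype.val '' s) := by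
    ext x
    constructor
    · rintro ⟨σ, hσ, rfl⟩
      exact ⟨sphereRot O σ, hσ, rfl⟩
    · rintro ⟨τ, hτ, hOx⟩
      have hx : x ∈ sphere (0 : E n) 1 := by
        rw [mem_sphere_zero_iff_norm, ← O.norm_map, ← hOx, ← mem_sphere_zero_iff_norm]
        exact τ.2
      refine ⟨⟨x, hx⟩, ?_, rfl⟩
      show sphereRot O ⟨x, hx⟩ ∈ s
      have : sphereRot O ⟨x, hx⟩ = τ := Subtype.ext hOx.symm
      rw [this]; exact hτ
  have hsmul : Ioo (0:ℝ) 1 • (⇑O ⁻¹' (Subtype.val '' s))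
      = ⇑O ⁻¹' (Ioo (0:ℝ) 1 • (Subtype.val '' s)) := by
    ext x
    simp only [Set.mem_smul_set, Set.mem_preimage, Set.mem_smul]
    constructor
    · rintro ⟨c, hc, y, hy, rfl⟩
      exact ⟨c, hc, O y, hy, (O.map_smul c y).symm ▸ rfl⟩
    · rintro ⟨c, hc, z, hz, hcz⟩
      refine ⟨c, hc, O.symm z, by simpa using hz, ?_⟩
      apply O.injective
      rw [O.map_smul]
      simpa using hcz
  rw [hset, hsmul]
  exact (O.measurePreserving).measure_preimage (smul_set_measurable hs).nullMeasurableSet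

lemma integral_sphereRot_real (O : E n ≃ₗᵢ[ℝ] E n) (f : sphere (0 : E n) 1 → ℝ)
    (hf : Continuous f) :
    ∫ σ, f (sphereRot O σ) ∂(volume : Measure (E n)).toSphere
      = ∫ σ, f σ ∂(volume : Measure (E n)).toSphere := by
  conv_rhs => rw [← map_sphereRot O]
  rw [integral_map (sphereRot_continuous O).measurable.aemeasurable hf.aestronglyMeasurable]

end Invariance

section Symmetry

variable {n : ℕ}

/-- the tangential coefficient vectors -/
def aV (i l : Fin n) (x : E n) : E n :=
  x i • EuclideanSpace.single i 1 + x l • EuclideanSpace.single l 1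

def bV (i l : Fin n) (x : E n) : E n :=
  (-(x l)) • EuclideanSpace.single i 1 + x i • EuclideanSpace.single l 1

variable {i l : Fin n}

lemma rotFun_decomp (hil : i ≠ l) (t : ℝ) (x : E n) :
    rotFun i l t x = Real.cos t • aV i l x + Real.sin t • bV i l x + (x - aV i l x) := by
  ext m
  simp only [rotFun, PiLp.toLp_apply, aV, bV, PiLp.add_apply, PiLp.sub_apply, PiLp.smul_apply,
    EuclideanSpace.single_apply, smul_eq_mul]
  by_cases hmi : m = i
  · subst hmi; simp [hil, hil.symm]; ring
  · by_cases hml : m = l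
    · subst hml; simp [hil, hil.symm, Ne.symm hmi]; ring
    · simp [hmi, hml]

lemma coord_le_norm (x : E n) (m : Fin n) : |x m| ≤ ‖x‖ := by
  rw [EuclideanSpace.norm_eq, ← Real.sqrt_sq_eq_abs]
  refine Real.sqrt_le_sqrt ?_
  have := Finset.single_le_sum (f := fun k => ‖x k‖ ^ 2)
    (fun k _ => by positivity) (Finset.mem_univ m)
  simpa [Real.norm_eq_abs, sq_abs] using this

lemma aV_norm_le (x : E n) : ‖aV i l x‖ ≤ 2 * ‖x‖ := by
  refine (norm_add_le _ _).trans ?_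
  rw [norm_smul, norm_smul, EuclideanSpace.norm_single, EuclideanSpace.norm_single]
  have h1 := coord_le_norm x i
  have h2 := coord_le_norm x l
  simp only [Real.norm_eq_abs, norm_one, mul_one]
  linarith

lemma bV_norm_le (x : E n) : ‖bV i l x‖ ≤ 2 * ‖x‖ := by
  refine (norm_add_le _ _).trans ?_
  rw [norm_smul, norm_smul, EuclideanSpace.norm_single, EuclideanSpace.norm_single]
  have h1 := coord_le_norm x i
  have h2 := coord_le_norm x l
  simp only [Real.norm_eq_abs, norm_one, mul_one, abs_neg]
  linarith

lemma symm_integral (h : E n → ℝ) (hh : ContDiffOn ℝ (⊤ : ℕ∞) h {(0 : E n)}ᶜ)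
    (hil : i ≠ l) {r : ℝ} (hr : 0 < r) :
    (∫ σ : sphere (0 : E n) 1, (σ : E n) i *
        fderiv ℝ h (r • (σ : E n)) (EuclideanSpace.single l 1)
      ∂(volume : Measure (E n)).toSphere)
    = ∫ σ : sphere (0 : E n) 1, (σ : E n) l *
        fderiv ℝ h (r • (σ : E n)) (EuclideanSpace.single i 1)
      ∂(volume : Measure (E n)).toSphere := by
  set μ := (volume : Measure (E n)).toSphere with hμ
  have hsnorm : ∀ σ : sphere (0 : E n) 1, ‖(σ : E n)‖ = 1 := fun σ => by
    have h2 := σ.2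
    rwa [mem_sphere_zero_iff_norm] at h2
  have hsne : ∀ σ : sphere (0 : E n) 1, (σ : E n) ≠ 0 := fun σ => by
    intro h0
    have := hsnorm σ
    rw [h0, norm_zero] at this
    norm_num at this
  have hrotn : ∀ (t : ℝ) (σ : sphere (0 : E n) 1), ‖rotFun i l t (σ : E n)‖ = 1 :=
    fun t σ => by rw [rotFun_norm hil, hsnorm]
  have hrot_ne : ∀ (t : ℝ) (σ : sphere (0 : E n) 1),
      r • rotFun i l t (σ : E n) ≠ 0 := by
    intro t σ
    refine smul_ne_zero hr.ne' ?_
    intro h0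
    have := hrotn t σ
    rw [h0, norm_zero] at this
    norm_num at this
  set F : ℝ → sphere (0 : E n) 1 → ℝ := fun t σ => h (r • rotFun i l t (σ : E n)) with hF
  set F' : sphere (0 : E n) 1 → ℝ := fun σ =>
    r * ((σ : E n) i * fderiv ℝ h (r • (σ : E n)) (EuclideanSpace.single l 1)
      - (σ : E n) l * fderiv ℝ h (r • (σ : E n)) (EuclideanSpace.single i 1)) with hF'
  have hval : ∀ σ : sphere (0 : E n) 1,
      fderiv ℝ h (r • (σ : E n)) (r • bV i l (σ : E n)) = F' σ := by
    intro σ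
    rw [hF']
    rw [ContinuousLinearMap.map_smul, smul_eq_mul]
    rw [show bV i l (σ : E n) = (-((σ : E n) l)) • EuclideanSpace.single i 1
      + (σ : E n) i • EuclideanSpace.single l 1 from rfl]
    rw [ContinuousLinearMap.map_add, ContinuousLinearMap.map_smul,
      ContinuousLinearMap.map_smul]
    simp only [smul_eq_mul]
    ring
  -- pointwise derivative at any t
  have hderiv : ∀ (t : ℝ) (σ : sphere (0 : E n) 1),
      HasDerivAt (fun s => F s σ)
        (fderiv ℝ h (r • rotFun i l t (σ : E n))
          (r • ((-Real.sin t) • aV i l (σ : E n) + Real.cos t • bV i l (σ : E n)))) t := by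
    intro t σ
    have hp : HasDerivAt (fun s => r • rotFun i l s (σ : E n))
        (r • ((-Real.sin t) • aV i l (σ : E n) + Real.cos t • bV i l (σ : E n))) t := by
      have h1 : (fun s => r • rotFun i l s (σ : E n)) =
          fun s => r • (Real.cos s • aV i l (σ : E n) + Real.sin s • bV i l (σ : E n)
            + ((σ : E n) - aV i l (σ : E n))) :=
        funext fun s => by rw [rotFun_decomp hil]
      rw [h1]
      exact ((((Real.hasDerivAt_cos t).smul_const (aV i l (σ : E n))).add
        ((Real.hasDerivAt_sin t).smul_const (bV i l (σ : E n)))).add_const _).const_smul r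
    have hdh : HasFDerivAt h (fderiv ℝ h (r • rotFun i l t (σ : E n)))
        (r • rotFun i l t (σ : E n)) := by
      refine DifferentiableAt.hasFDerivAt ?_
      refine (hh.contDiffAt (isOpen_compl_singleton.mem_nhds ?_)).differentiableAt (by simp)
      simpa using hrot_ne t σ
    exact hdh.comp_hasDerivAt t hp
  -- uniform bound for the derivative
  obtain ⟨C, hC⟩ := (isCompact_sphere (0 : E n) r).exists_bound_of_continuousOn
    ((hh.continuousOn_fderiv_of_isOpen isOpen_compl_singleton (by exact_mod_cast le_top)).mono
      (fun x hx => by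
        simp only [mem_sphere_zero_iff_norm] at hx
        simp only [Set.mem_compl_iff, Set.mem_singleton_iff]
        intro h0; rw [h0, norm_zero] at hx; exact hr.ne (hx ▸ rfl)))
  set B : ℝ := (max C 0) * (r * 4) with hB
  have hBnonneg : 0 ≤ B := by positivity
  have hbound : ∀ (t : ℝ) (σ : sphere (0 : E n) 1),
      ‖fderiv ℝ h (r • rotFun i l t (σ : E n))
        (r • ((-Real.sin t) • aV i l (σ : E n) + Real.cos t • bV i l (σ : E n)))‖ ≤ B := by
    intro t σ
    have hmem : r • rotFun i l t (σ : E n) ∈ sphere (0 : E n) r := by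
      rw [mem_sphere_zero_iff_norm, norm_smul, hrotn, Real.norm_eq_abs,
        abs_of_pos hr, mul_one]
    have h1 := (fderiv ℝ h (r • rotFun i l t (σ : E n))).le_opNorm
      (r • ((-Real.sin t) • aV i l (σ : E n) + Real.cos t • bV i l (σ : E n)))
    have h2 : ‖fderiv ℝ h (r • rotFun i l t (σ : E n))‖ ≤ max C 0 :=
      le_trans (hC _ hmem) (le_max_left _ _)
    have h3 : ‖r • ((-Real.sin t) • aV i l (σ : E n) + Real.cos t • bV i l (σ : E n))‖
        ≤ r * 4 := by
      rw [norm_smul, Real.norm_eq_abs, abs_of_pos hr]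
      refine mul_le_mul_of_nonneg_left ?_ hr.le
      refine (norm_add_le _ _).trans ?_
      rw [norm_smul, norm_smul]
      have ha := aV_norm_le (i := i) (l := l) (σ : E n)
      have hb := bV_norm_le (i := i) (l := l) (σ : E n)
      rw [hsnorm σ] at ha hb
      have hs1 : ‖-Real.sin t‖ ≤ 1 := by
        rw [Real.norm_eq_abs, abs_neg]; exact Real.abs_sin_le_one t
      have hc1 : ‖Real.cos t‖ ≤ 1 := by
        rw [Real.norm_eq_abs]; exact Real.abs_cos_le_one t
      nlinarith [norm_nonneg (aV i l (σ : E n)), norm_nonneg (bV i l (σ : E n)),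
        norm_nonneg (-Real.sin t), norm_nonneg (Real.cos t)]
    calc ‖_‖ ≤ _ := h1
    _ ≤ max C 0 * (r * 4) := by
        refine mul_le_mul h2 h3 (norm_nonneg _) (le_max_right _ _)
    _ = B := rfl
  -- continuity facts
  have hFcont : ∀ t : ℝ, Continuous (F t) := by
    intro t
    refine hh.continuousOn.comp_continuous ?_ ?_
    · exact continuous_const.fun_smul (((rotEquiv hil t).continuous).comp continuous_subtype_val)
    · intro σ
      simpa using hrot_ne t σ
  have hfdcont : Continuous (fun σ : sphere (0 : E n) 1 => fderiv ℝ h (r • (σ : E n))) := by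
    refine (hh.continuousOn_fderiv_of_isOpen isOpen_compl_singleton (by exact_mod_cast le_top)).comp_continuous
      (continuous_const.fun_smul continuous_subtype_val) ?_
    intro σ
    simpa using smul_ne_zero hr.ne' (hsne σ)
  have hbVcont : Continuous (fun σ : sphere (0 : E n) 1 => r • bV i l (σ : E n)) := by
    refine continuous_const.fun_smul ?_
    refine Continuous.add ?_ ?_
    · exact (((EuclideanSpace.proj l).continuous.comp continuous_subtype_val).neg).fun_smul
        continuous_const
    · exact ((EuclideanSpace.proj i).continuous.comp continuous_subtype_val).fun_smul
        continuous_const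
  have hF'cont : Continuous F' := by
    rw [hF']
    refine continuous_const.mul (Continuous.sub ?_ ?_)
    · exact ((EuclideanSpace.proj i).continuous.comp continuous_subtype_val).mul
        (hfdcont.clm_apply continuous_const)
    · exact ((EuclideanSpace.proj l).continuous.comp continuous_subtype_val).mul
        (hfdcont.clm_apply continuous_const)
  have hcont_int : ∀ {g : sphere (0 : E n) 1 → ℝ}, Continuous g → Integrable g μ :=
    fun hg => hg.integrable_of_hasCompactSupport (isClosed_tsupport _).isCompact
  -- apply dominated differentiation
  have key := hasDerivAt_integral_of_dominated_loc_of_lip (F := F) (F' := F')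
    (μ := μ) (x₀ := 0) (bound := fun _ => B) (s := ball 0 1) (ball_mem_nhds 0 one_pos)
    (Eventually.of_forall fun t => (hFcont t).aestronglyMeasurable)
    (hcont_int (hFcont 0))
    hF'cont.aestronglyMeasurable
    (Eventually.of_forall fun σ => ?_)
    (integrable_const B)
    (Eventually.of_forall fun σ => ?_)
  · -- use the key
    obtain ⟨-, hDer⟩ := key
    have hconstF : (fun t => ∫ σ, F t σ ∂μ) = fun _ => ∫ σ, F 0 σ ∂μ := by
      funext t
      have hcf : Continuous (fun τ : sphere (0 : E n) 1 => h (r • (τ : E n))) := by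
        refine hh.continuousOn.comp_continuous
          (continuous_const.fun_smul continuous_subtype_val) ?_
        intro τ
        simpa using smul_ne_zero hr.ne' (hsne τ)
      have h1 : (fun σ : sphere (0 : E n) 1 => F t σ)
          = fun σ => (fun τ : sphere (0 : E n) 1 => h (r • (τ : E n)))
              (sphereRot (rotEquiv hil t) σ) := rfl
      have h2 : (fun σ : sphere (0 : E n) 1 => F 0 σ)
          = fun σ : sphere (0 : E n) 1 => h (r • (σ : E n)) := by
        funext σ; rw [hF]; simp only [rotFun_zero]
      rw [h1, hμ, integral_sphereRot_real _ _ hcf, h2]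
    rw [hconstF] at hDer
    have hzero : ∫ σ, F' σ ∂μ = 0 := hDer.unique (hasDerivAt_const _ _)
    have hF'eq : F' = fun σ : sphere (0 : E n) 1 =>
        r • ((σ : E n) i * fderiv ℝ h (r • (σ : E n)) (EuclideanSpace.single l 1)
          - (σ : E n) l * fderiv ℝ h (r • (σ : E n)) (EuclideanSpace.single i 1)) := by
      funext σ
      rw [hF', smul_eq_mul]
    rw [hF'eq, integral_smul, smul_eq_mul, mul_eq_zero] at hzero
    rcases hzero with h0 | h0
    · exact absurd h0 hr.ne'
    · have hi1 : Integrable (fun σ : sphere (0 : E n) 1 =>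
          (σ : E n) i * fderiv ℝ h (r • (σ : E n)) (EuclideanSpace.single l 1)) μ := by
        refine hcont_int ?_
        exact ((EuclideanSpace.proj i).continuous.comp continuous_subtype_val).mul
          (hfdcont.clm_apply continuous_const)
      have hi2 : Integrable (fun σ : sphere (0 : E n) 1 =>
          (σ : E n) l * fderiv ℝ h (r • (σ : E n)) (EuclideanSpace.single i 1)) μ := by
        refine hcont_int ?_
        exact ((EuclideanSpace.proj l).continuous.comp continuous_subtype_val).mul
          (hfdcont.clm_apply continuous_const)
      rw [integral_sub hi1 hi2] at h0
      exact sub_eq_zero.1 h0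
  · -- Lipschitz
    refine Convex.lipschitzOnWith_of_nnnorm_hasDerivWithin_le (convex_ball (0:ℝ) 1)
      (f' := fun t => fderiv ℝ h (r • rotFun i l t (σ : E n))
        (r • ((-Real.sin t) • aV i l (σ : E n) + Real.cos t • bV i l (σ : E n))))
      (fun t _ => (hderiv t σ).hasDerivWithinAt) ?_
    intro t _
    have := hbound t σ
    rw [← NNReal.coe_le_coe]
    rw [coe_nnnorm, Real.coe_nnabs, abs_of_nonneg hBnonneg]
    exact this
  · -- derivative at 0
    have hd := hderiv 0 σ
    simp only [rotFun_zero, Real.sin_zero, Real.cos_zero, neg_zero, zero_smul, one_smul,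
      zero_add] at hd
    rwa [hval σ] at hd

end Symmetry

section Main

theorem stmt_5' (N : ℕ) (hN : 3 ≤ N)
    (u : EuclideanSpace ℝ (Fin N) → EuclideanSpace ℝ (Fin N))
    (hu : ContDiffOn ℝ (⊤ : ℕ∞) u {(0 : EuclideanSpace ℝ (Fin N))}ᶜ)
    (htor : ∀ x, x ≠ 0 → ∑ k, x k * u x k = 0)
    (hdiv : ∀ x, x ≠ 0 → ∑ k, fderiv ℝ (fun y => u y k) x (EuclideanSpace.single k 1) = 0)
    (r : ℝ) (hr : 0 < r) :
    (∫ σ : sphere (0 : EuclideanSpace ℝ (Fin N)) 1,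
        u (r • (σ : EuclideanSpace ℝ (Fin N))) ∂(volume : Measure (E N)).toSphere) = 0 := by
  classical
  set μ := (volume : Measure (E N)).toSphere with hμ
  have hsne : ∀ σ : sphere (0 : E N) 1, (σ : E N) ≠ 0 := fun σ => by
    intro h0
    have h2 := σ.2
    rw [mem_sphere_zero_iff_norm, h0, norm_zero] at h2
    norm_num at h2
  have hrs_ne : ∀ σ : sphere (0 : E N) 1, r • (σ : E N) ≠ 0 :=
    fun σ => smul_ne_zero hr.ne' (hsne σ)
  have hu_cont : Continuous (fun σ : sphere (0 : E N) 1 => u (r • (σ : E N))) :=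
    hu.continuousOn.comp_continuous (continuous_const.fun_smul continuous_subtype_val)
      (fun σ => by simpa using hrs_ne σ)
  have hcont_int : ∀ {g : sphere (0 : E N) 1 → ℝ}, Continuous g → Integrable g μ :=
    fun hg => hg.integrable_of_hasCompactSupport (isClosed_tsupport _).isCompact
  have hInt : Integrable (fun σ : sphere (0 : E N) 1 => u (r • (σ : E N))) μ :=
    hu_cont.integrable_of_hasCompactSupport (isClosed_tsupport _).isCompact
  -- differentiability of components
  have hDiffAt : ∀ x : E N, x ≠ 0 → DifferentiableAt ℝ u x := fun x hx =>
    (hu.contDiffAt (isOpen_compl_singleton.mem_nhds (by simpa using hx))).differentiableAt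
      (by simp)
  have huk : ∀ k : Fin N, ContDiffOn ℝ (⊤ : ℕ∞) (fun y => u y k) {(0 : E N)}ᶜ := fun k =>
    ((EuclideanSpace.proj k : E N →L[ℝ] ℝ).contDiff.comp_contDiffOn hu :
      ContDiffOn ℝ (⊤ : ℕ∞) (fun y => EuclideanSpace.proj k (u y)) {(0 : E N)}ᶜ)
  have hDk : ∀ (k : Fin N) (x : E N), x ≠ 0 → DifferentiableAt ℝ (fun y => u y k) x :=
    fun k x hx =>
      (((EuclideanSpace.proj k : E N →L[ℝ] ℝ).differentiableAt).comp x (hDiffAt x hx) :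
        DifferentiableAt ℝ (fun y => EuclideanSpace.proj k (u y)) x)
  have hDkcont : ∀ k : Fin N,
      Continuous (fun σ : sphere (0 : E N) 1 => fderiv ℝ (fun y => u y k) (r • (σ : E N))) := by
    intro k
    refine ((huk k).continuousOn_fderiv_of_isOpen isOpen_compl_singleton
      (by exact_mod_cast le_top)).comp_continuous
      (continuous_const.fun_smul continuous_subtype_val) ?_
    intro σ
    simpa using hrs_ne σ
  -- differentiated tangency identity
  have htan : ∀ x : E N, x ≠ 0 → ∀ j : Fin N,
      u x j = -(∑ k, x k * fderiv ℝ (fun y => u y k) x (EuclideanSpace.single j 1)) := by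
    intro x hx j
    have hL : ∀ k : Fin N, HasFDerivAt (fun y : E N => y k * u y k)
        ((x k) • fderiv ℝ (fun y => u y k) x
          + (u x k) • (EuclideanSpace.proj k : E N →L[ℝ] ℝ)) x := by
      intro k
      exact ((EuclideanSpace.proj k : E N →L[ℝ] ℝ).hasFDerivAt).mul (hDk k x hx).hasFDerivAt
    have hsum : HasFDerivAt (fun y : E N => ∑ k, y k * u y k)
        (∑ k, ((x k) • fderiv ℝ (fun y => u y k) x
          + (u x k) • (EuclideanSpace.proj k : E N →L[ℝ] ℝ))) x :=
      HasFDerivAt.fun_sum (fun k _ => hL k)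
    have hzero : HasFDerivAt (fun y : E N => ∑ k, y k * u y k) (0 : E N →L[ℝ] ℝ) x := by
      have hev : (fun y : E N => ∑ k, y k * u y k) =ᶠ[nhds x] fun _ => (0 : ℝ) := by
        filter_upwards [isOpen_compl_singleton.mem_nhds
          (show x ∈ {(0 : E N)}ᶜ by simpa using hx)] with y hy
        exact htor y (by simpa using hy)
      exact (hasFDerivAt_const (0 : ℝ) x).congr_of_eventuallyEq hev
    have huniq := hsum.unique hzero
    have happ := congrArg (fun L : E N →L[ℝ] ℝ => L (EuclideanSpace.single j 1)) huniq
    simp only [ContinuousLinearMap.coe_sum', Finset.sum_apply,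
      ContinuousLinearMap.add_apply, ContinuousLinearMap.coe_smul', Pi.smul_apply,
      ContinuousLinearMap.zero_apply, smul_eq_mul, PiLp.proj_apply,
      EuclideanSpace.single_apply] at happ
    rw [Finset.sum_add_distrib] at happ
    have hsum2 : (∑ k : Fin N, u x k * (if k = j then (1:ℝ) else 0)) = u x j := by
      rw [Finset.sum_congr rfl (fun k _ => by rw [mul_ite, mul_one, mul_zero])]
      simp
    rw [hsum2] at happ
    linarith
  -- componentwise reduction
  refine PiLp.ext fun j => ?_
  have hproj := (EuclideanSpace.proj j : E N →L[ℝ] ℝ).integral_comp_comm hInt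
  have hcomp : (∫ σ : sphere (0 : E N) 1, u (r • (σ : E N)) ∂μ) j
      = ∫ σ : sphere (0 : E N) 1, u (r • (σ : E N)) j ∂μ := by
    have h2 : ∀ σ : sphere (0 : E N) 1,
        EuclideanSpace.proj j (u (r • (σ : E N))) = u (r • (σ : E N)) j := fun σ => rfl
    exact hproj.symm
  rw [hcomp]
  have hstep1 : (fun σ : sphere (0 : E N) 1 => u (r • (σ : E N)) j)
      = fun σ : sphere (0 : E N) 1 =>
        -(∑ k, r * ((σ : E N) k
          * fderiv ℝ (fun y => u y k) (r • (σ : E N)) (EuclideanSpace.single j 1))) := by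
    funext σ
    rw [htan _ (hrs_ne σ) j]
    congr 1
    refine Finset.sum_congr rfl fun k _ => ?_
    have hc : (r • (σ : E N)) k = r * (σ : E N) k := rfl
    rw [hc]
    ring
  rw [hstep1, integral_neg]
  have hgcont : ∀ k : Fin N, Continuous (fun σ : sphere (0 : E N) 1 =>
      (σ : E N) k * fderiv ℝ (fun y => u y k) (r • (σ : E N)) (EuclideanSpace.single j 1)) :=
    fun k => ((EuclideanSpace.proj k).continuous.comp continuous_subtype_val).mul
      ((hDkcont k).clm_apply continuous_const)
  have hsplit : (∫ σ : sphere (0 : E N) 1, ∑ k, r * ((σ : E N) k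
        * fderiv ℝ (fun y => u y k) (r • (σ : E N)) (EuclideanSpace.single j 1)) ∂μ)
      = ∑ k, r * ∫ σ : sphere (0 : E N) 1, (σ : E N) k
        * fderiv ℝ (fun y => u y k) (r • (σ : E N)) (EuclideanSpace.single j 1) ∂μ := by
    rw [integral_finset_sum _ (fun k _ => (hcont_int (hgcont k)).const_mul r)]
    exact Finset.sum_congr rfl fun k _ => integral_const_mul r _
  rw [hsplit]
  have hswap : ∀ k : Fin N,
      (∫ σ : sphere (0 : E N) 1, (σ : E N) k
        * fderiv ℝ (fun y => u y k) (r • (σ : E N)) (EuclideanSpace.single j 1) ∂μ)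
      = ∫ σ : sphere (0 : E N) 1, (σ : E N) j
        * fderiv ℝ (fun y => u y k) (r • (σ : E N)) (EuclideanSpace.single k 1) ∂μ := by
    intro k
    by_cases hkj : k = j
    · subst hkj; rfl
    · exact symm_integral (fun y => u y k) (huk k) hkj hr
  rw [Finset.sum_congr rfl fun k _ => by rw [hswap k]]
  have hcollect : (∑ k : Fin N, r * ∫ σ : sphere (0 : E N) 1, (σ : E N) j
        * fderiv ℝ (fun y => u y k) (r • (σ : E N)) (EuclideanSpace.single k 1) ∂μ)
      = r * ∫ σ : sphere (0 : E N) 1, ∑ k, (σ : E N) j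
        * fderiv ℝ (fun y => u y k) (r • (σ : E N)) (EuclideanSpace.single k 1) ∂μ := by
    rw [← Finset.mul_sum]
    congr 1
    rw [← integral_finset_sum]
    intro k _
    exact hcont_int (((EuclideanSpace.proj j).continuous.comp continuous_subtype_val).mul
      ((hDkcont k).clm_apply continuous_const))
  rw [hcollect]
  have hzero : (fun σ : sphere (0 : E N) 1 => ∑ k, (σ : E N) j
      * fderiv ℝ (fun y => u y k) (r • (σ : E N)) (EuclideanSpace.single k 1))
      = fun _ => (0 : ℝ) := by
    funext σ
    rw [← Finset.mul_sum, hdiv _ (hrs_ne σ), mul_zero]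
  rw [hzero, integral_zero, mul_zero, neg_zero]
  rfl

end Main


/-- A smooth toroidal field on `ℝ^N ∖ {0}` (i.e. `x·u(x) = 0` and `div u = 0` away from
the origin) has zero spherical mean on every sphere of radius `r > 0`. -/
theorem stmt_5 (N : ℕ) (hN : 3 ≤ N)
    (u : EuclideanSpace ℝ (Fin N) → EuclideanSpace ℝ (Fin N))
    (hu : ContDiffOn ℝ (⊤ : ℕ∞) u {(0 : EuclideanSpace ℝ (Fin N))}ᶜ)
    (htor : ∀ x, x ≠ 0 → ∑ k, x k * u x k = 0)
    (hdiv : ∀ x, x ≠ 0 → divg u x = 0)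
    (r : ℝ) (hr : 0 < r) :
    (∫ σ : sphere (0 : EuclideanSpace ℝ (Fin N)) 1,
        u (r • (σ : EuclideanSpace ℝ (Fin N))) ∂(sphereMeasure N)) = 0 := by
  exact stmt_5' N hN u hu htor (fun x hx => hdiv x hx) r hr
end
end

section
/- Let μ > 0 and ε > 0 with ε < μ²/4, and let g : (0,∞) → ℝ be a smooth function satisfying the boundary conditions (B) and having finite D_μ-norm. Then Q[g] · P₁[g] ≥ (1/4)(√(μ²−4ε)+1)² · (P₀[g])², i.e. ∫₀^∞ (g'')² x^{μ+1} dx · ∫₀^∞ (x²(g')² − ε g²) x^{μ−1} dx ≥ (1/4)(√(μ²−4ε)+1)² (∫₀^∞ (g')² x^μ dx)². -/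
open MeasureTheory Filter

noncomputable section

/-- `P₀[g] = ∫₀^∞ (g')² x^μ dx`. -/
def P0 (μ : ℝ) (g : ℝ → ℝ) : ℝ :=
  ∫ x in Set.Ioi (0 : ℝ), (deriv g x) ^ 2 * x ^ μ

/-- `P₁[g] = ∫₀^∞ (x²(g')² − ε g²) x^{μ−1} dx`. -/
def P1 (μ ε : ℝ) (g : ℝ → ℝ) : ℝ :=
  ∫ x in Set.Ioi (0 : ℝ), (x ^ 2 * (deriv g x) ^ 2 - ε * (g x) ^ 2) * x ^ (μ - 1)

/-- `Q[g] = ∫₀^∞ (g'')² x^{μ+1} dx`. -/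
def Q (μ : ℝ) (g : ℝ → ℝ) : ℝ :=
  ∫ x in Set.Ioi (0 : ℝ), (deriv (deriv g) x) ^ 2 * x ^ (μ + 1)

/-- The boundary conditions (B): `limsup_{x→0}(|g|+|g'|) < ∞` and
`x^{μ+1} g'(x)² + x^μ g(x)² → 0` as `x → ∞`. -/
def BoundaryB (μ : ℝ) (g : ℝ → ℝ) : Prop :=
  (∃ M : ℝ, ∀ᶠ x in nhdsWithin 0 (Set.Ioi (0 : ℝ)), |g x| + |deriv g x| ≤ M) ∧
    Tendsto (fun x : ℝ => x ^ (μ + 1) * (deriv g x) ^ 2 + x ^ μ * (g x) ^ 2)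
      atTop (nhds 0)

/-- `g` has finite `D_μ`-norm. -/
def FiniteDmu (μ : ℝ) (g : ℝ → ℝ) : Prop :=
  IntegrableOn (fun x => (deriv (deriv g) x) ^ 2 * x ^ (μ + 1)) (Set.Ioi 0) volume ∧
    IntegrableOn (fun x => (deriv g x) ^ 2 * (x + 1) * x ^ μ) (Set.Ioi 0) volume ∧
    IntegrableOn (fun x => (g x) ^ 2 * x ^ (μ - 1)) (Set.Ioi 0) volume

/-- Improper integration by parts on `(0,∞)`. -/
lemma ibp_zero (F F' : ℝ → ℝ)
    (hF : ∀ x ∈ Set.Ioi (0:ℝ), HasDerivAt F (F' x) x)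
    (hint : IntegrableOn F' (Set.Ioi 0) volume)
    (htop : Tendsto F atTop (nhds 0))
    (h0 : Tendsto F (nhdsWithin 0 (Set.Ioi 0)) (nhds 0)) :
    ∫ x in Set.Ioi (0:ℝ), F' x = 0 := by
  have hseq : ∀ n : ℕ, (0:ℝ) < 1/(n+1) := fun n => by positivity
  have key : ∀ n : ℕ, ∫ x in Set.Ioi ((1:ℝ)/(n+1)), F' x = 0 - F (1/(n+1)) := by
    intro n
    refine integral_Ioi_of_hasDerivAt_of_tendsto
      ((hF _ (hseq n)).continuousAt.continuousWithinAt)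
      (fun x hx => hF x (lt_trans (hseq n) hx))
      (hint.mono_set (Set.Ioi_subset_Ioi (hseq n).le)) htop
  have hmono : Monotone (fun n : ℕ => Set.Ioi ((1:ℝ)/(n+1))) := by
    intro n m hnm
    apply Set.Ioi_subset_Ioi
    apply one_div_le_one_div_of_le (by positivity)
    exact_mod_cast Nat.add_le_add_right hnm 1
  have hU : (⋃ n : ℕ, Set.Ioi ((1:ℝ)/(n+1))) = Set.Ioi 0 := by
    ext x
    simp only [Set.mem_iUnion, Set.mem_Ioi]
    constructor
    · rintro ⟨n, hn⟩; exact lt_trans (hseq n) hn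
    · intro hx; exact exists_nat_one_div_lt hx
  have h1 : Tendsto (fun n : ℕ => ∫ x in Set.Ioi ((1:ℝ)/(n+1)), F' x) atTop
      (nhds (∫ x in Set.Ioi (0:ℝ), F' x)) := by
    have := tendsto_setIntegral_of_monotone (fun n : ℕ => measurableSet_Ioi) hmono
      (by rw [hU]; exact hint)
    rwa [hU] at this
  have h2 : Tendsto (fun n : ℕ => ∫ x in Set.Ioi ((1:ℝ)/(n+1)), F' x) atTop (nhds 0) := by
    simp only [key]
    have hseq' : Tendsto (fun n : ℕ => (1:ℝ)/(n+1)) atTop (nhdsWithin 0 (Set.Ioi 0)) :=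
      tendsto_nhdsWithin_of_tendsto_nhds_of_eventually_within _
        tendsto_one_div_add_atTop_nhds_zero_nat (Eventually.of_forall fun n => hseq n)
    have := h0.comp hseq'
    simpa using (tendsto_const_nhds (x := (0:ℝ))).sub this
  exact tendsto_nhds_unique h1 h2

/-- Cauchy–Schwarz for set integrals. -/
lemma integral_cs (F G : ℝ → ℝ) (s : Set ℝ)
    (hF2 : IntegrableOn (fun x => F x ^ 2) s volume)
    (hG2 : IntegrableOn (fun x => G x ^ 2) s volume)
    (hFG : IntegrableOn (fun x => F x * G x) s volume) :
    (∫ x in s, F x * G x) ^ 2 ≤ (∫ x in s, F x ^ 2) * ∫ x in s, G x ^ 2 := by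
  have key : ∀ t : ℝ, 0 ≤ (∫ x in s, F x ^ 2) * (t * t)
      + (2 * ∫ x in s, F x * G x) * t + (∫ x in s, G x ^ 2) := by
    intro t
    have h0 : 0 ≤ ∫ x in s, (t * F x + G x) ^ 2 :=
      integral_nonneg fun x => sq_nonneg _
    have e : ∫ x in s, (t * F x + G x) ^ 2
        = (t*t) * (∫ x in s, F x ^ 2) + (2*t) * (∫ x in s, F x * G x) + ∫ x in s, G x ^ 2 := by
      have efn : (fun x => (t * F x + G x) ^ 2)
          = fun x => ((t*t) * (F x ^ 2) + (2*t) * (F x * G x)) + G x ^ 2 := by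
        funext x; ring
      have iA : Integrable (fun x => (t*t) * F x ^ 2) (volume.restrict s) := hF2.const_mul _
      have iB : Integrable (fun x => (2*t) * (F x * G x)) (volume.restrict s) := hFG.const_mul _
      have iAB : Integrable (fun x => (t*t) * F x ^ 2 + (2*t) * (F x * G x))
          (volume.restrict s) := iA.add iB
      rw [efn, integral_add iAB hG2, integral_add iA iB, integral_const_mul,
        integral_const_mul]
    rw [e] at h0
    linarith
  have hd := discrim_le_zero key
  rw [discrim] at hd
  nlinarith [hd]

/-- Product of two functions with square-integrable weighted pieces is integrable. -/
lemma int_cross (u v : ℝ → ℝ) (p q r : ℝ) (hpq : p + q = 2*r)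
    (hu : IntegrableOn (fun x => u x ^ 2 * x ^ p) (Set.Ioi 0) volume)
    (hv : IntegrableOn (fun x => v x ^ 2 * x ^ q) (Set.Ioi 0) volume)
    (hm : AEStronglyMeasurable (fun x => u x * v x * x ^ r)
      (volume.restrict (Set.Ioi 0))) :
    IntegrableOn (fun x => u x * v x * x ^ r) (Set.Ioi 0) volume := by
  refine Integrable.mono' ((hu.add hv).const_mul (1/2)) hm ?_
  rw [ae_restrict_iff' measurableSet_Ioi]
  refine Eventually.of_forall fun x hx => ?_
  have hx0 : (0:ℝ) < x := hx
  have ep : x ^ p = (x ^ (p/2)) * (x ^ (p/2)) := by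
    rw [← Real.rpow_add hx0]; ring_nf
  have eq' : x ^ q = (x ^ (q/2)) * (x ^ (q/2)) := by
    rw [← Real.rpow_add hx0]; ring_nf
  have er : x ^ r = (x ^ (p/2)) * (x ^ (q/2)) := by
    rw [← Real.rpow_add hx0, show p/2 + q/2 = r by linarith]
  set a := u x * x ^ (p/2) with ha
  set b := v x * x ^ (q/2) with hb
  have e1 : u x ^ 2 * x ^ p = a * a := by rw [ha, ep]; ring
  have e2 : v x ^ 2 * x ^ q = b * b := by rw [hb, eq']; ring
  have e3 : u x * v x * x ^ r = a * b := by rw [ha, hb, er]; ring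
  rw [Real.norm_eq_abs, e3]
  have habs : |a * b| ≤ (a*a + b*b)/2 := by
    rw [abs_mul]
    nlinarith [sq_nonneg (|a| - |b|), abs_nonneg a, abs_nonneg b, sq_abs a, sq_abs b]
  calc |a*b| ≤ (a*a + b*b)/2 := habs
    _ = 1/2 * (u x ^ 2 * x ^ p + v x ^ 2 * x ^ q) := by rw [e1, e2]; ring

/-- Functions bounded near `0+` times a positive power tend to `0`. -/
lemma tendsto_zero_at0 (u : ℝ → ℝ) (p : ℝ) (hp : 0 < p) (M : ℝ)
    (hM : ∀ᶠ x in nhdsWithin 0 (Set.Ioi (0:ℝ)), |u x| ≤ M) :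
    Tendsto (fun x => u x * x ^ p) (nhdsWithin 0 (Set.Ioi (0:ℝ))) (nhds 0) := by
  have hxp : Tendsto (fun x : ℝ => M * x ^ p) (nhdsWithin 0 (Set.Ioi (0:ℝ))) (nhds 0) := by
    have hc : Tendsto (fun x : ℝ => x ^ p) (nhdsWithin 0 (Set.Ioi (0:ℝ))) (nhds 0) := by
      have := (Real.continuousAt_rpow_const 0 p (Or.inr hp.le)).continuousWithinAt
        (s := Set.Ioi (0:ℝ))
      rwa [ContinuousWithinAt, Real.zero_rpow hp.ne'] at this
    simpa using hc.const_mul M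
  refine squeeze_zero_norm' ?_ hxp
  filter_upwards [hM, self_mem_nhdsWithin] with x hx1 hx2
  have hx0 : (0:ℝ) < x := hx2
  have hxppos : (0:ℝ) ≤ x ^ p := (Real.rpow_pos_of_pos hx0 p).le
  rw [Real.norm_eq_abs, abs_mul, abs_of_nonneg hxppos]
  exact mul_le_mul_of_nonneg_right hx1 hxppos

lemma deriv_contDiffOn {g : ℝ → ℝ} (hg : ContDiffOn ℝ (⊤ : ℕ∞) g (Set.Ioi 0)) :
    ContDiffOn ℝ (⊤ : ℕ∞) (deriv g) (Set.Ioi 0) :=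
  hg.deriv_of_isOpen isOpen_Ioi (by exact_mod_cast le_refl _)

set_option maxHeartbeats 1600000 in
/-- Sharp one-dimensional inequality: `Q[g]·P₁[g] ≥ (1/4)(√(μ²−4ε)+1)² (P₀[g])²`. -/
theorem stmt_10 (μ ε : ℝ) (hμ : 0 < μ) (hε : 0 < ε) (hεμ : ε < μ ^ 2 / 4)
    (g : ℝ → ℝ) (hg : ContDiffOn ℝ (⊤ : ℕ∞) g (Set.Ioi 0))
    (hB : BoundaryB μ g) (hD : FiniteDmu μ g) :
    (1 / 4) * (Real.sqrt (μ ^ 2 - 4 * ε) + 1) ^ 2 * (P0 μ g) ^ 2 ≤ Q μ g * P1 μ ε g := by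
  obtain ⟨⟨M, hM⟩, hBtop⟩ := hB
  obtain ⟨hQint, hDint, hGint⟩ := hD
  have hs2 : Real.sqrt (μ ^ 2 - 4 * ε) ^ 2 = μ ^ 2 - 4 * ε := Real.sq_sqrt (by nlinarith)
  set s : ℝ := Real.sqrt (μ ^ 2 - 4 * ε) with hsdef
  have hs0 : 0 < s := Real.sqrt_pos.2 (by nlinarith)
  set a : ℝ := -(μ + s)/2 with hadef
  have ha : a ^ 2 + a * μ = -ε := by rw [hadef]; linear_combination hs2/4
  -- differentiability and continuity
  have hgc1 : ContDiffOn ℝ (⊤:ℕ∞) (deriv g) (Set.Ioi 0) := deriv_contDiffOn hg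
  have hgc2 : ContDiffOn ℝ (⊤:ℕ∞) (deriv (deriv g)) (Set.Ioi 0) := deriv_contDiffOn hgc1
  have hcg : ContinuousOn g (Set.Ioi 0) := hg.continuousOn
  have hcg1 : ContinuousOn (deriv g) (Set.Ioi 0) := hgc1.continuousOn
  have hcg2 : ContinuousOn (deriv (deriv g)) (Set.Ioi 0) := hgc2.continuousOn
  have hd1 : ∀ x ∈ Set.Ioi (0:ℝ), HasDerivAt g (deriv g x) x := fun x hx =>
    ((hg.differentiableOn (by simp)).differentiableAt (isOpen_Ioi.mem_nhds hx)).hasDerivAt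
  have hd2 : ∀ x ∈ Set.Ioi (0:ℝ), HasDerivAt (deriv g) (deriv (deriv g) x) x := fun x hx =>
    ((hgc1.differentiableOn (by simp)).differentiableAt (isOpen_Ioi.mem_nhds hx)).hasDerivAt
  have hcr : ∀ r : ℝ, ContinuousOn (fun x : ℝ => x ^ r) (Set.Ioi 0) := fun r x hx =>
    (Real.continuousAt_rpow_const x r (Or.inl (ne_of_gt hx))).continuousWithinAt
  have hmeas : ∀ (f : ℝ → ℝ), ContinuousOn f (Set.Ioi 0) →
      AEStronglyMeasurable f (volume.restrict (Set.Ioi (0:ℝ))) := fun f hf =>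
    hf.aestronglyMeasurable measurableSet_Ioi
  -- base integrability
  have iB : IntegrableOn (fun x => deriv g x ^ 2 * x ^ (μ+1)) (Set.Ioi 0) volume := by
    refine Integrable.mono' hDint (hmeas _ ((hcg1.pow 2).mul (hcr _))) ?_
    rw [ae_restrict_iff' measurableSet_Ioi]
    refine Eventually.of_forall fun x hx => ?_
    have hx0 : (0:ℝ) < x := hx
    have h1 : x ^ (μ+1) = x ^ μ * x := by rw [Real.rpow_add hx0, Real.rpow_one]
    have h2 : (0:ℝ) ≤ x ^ μ := (Real.rpow_pos_of_pos hx0 μ).le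
    rw [Real.norm_eq_abs,
      abs_of_nonneg (mul_nonneg (sq_nonneg _) (Real.rpow_pos_of_pos hx0 _).le), h1]
    nlinarith [mul_nonneg (sq_nonneg (deriv g x)) h2]
  have iP : IntegrableOn (fun x => deriv g x ^ 2 * x ^ μ) (Set.Ioi 0) volume := by
    refine Integrable.mono' hDint (hmeas _ ((hcg1.pow 2).mul (hcr _))) ?_
    rw [ae_restrict_iff' measurableSet_Ioi]
    refine Eventually.of_forall fun x hx => ?_
    have hx0 : (0:ℝ) < x := hx
    have h2 : (0:ℝ) ≤ x ^ μ := (Real.rpow_pos_of_pos hx0 μ).le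
    rw [Real.norm_eq_abs, abs_of_nonneg (mul_nonneg (sq_nonneg _) h2)]
    nlinarith [mul_nonneg (sq_nonneg (deriv g x)) h2]
  -- bound near zero
  have hMev := eventually_nhdsWithin_iff.mp hM
  obtain ⟨δ, hδpos, hδ⟩ := Metric.eventually_nhds_iff.mp hMev
  have hbound : ∀ x ∈ Set.Ioo (0:ℝ) δ, |g x| + |deriv g x| ≤ M := by
    intro x hx
    exact hδ (by rw [Real.dist_eq, sub_zero, abs_of_pos hx.1]; exact hx.2) hx.1
  have iR : IntegrableOn (fun x => deriv g x ^ 2 * x ^ (μ-1)) (Set.Ioi 0) volume := by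
    have hsplit : Set.Ioi (0:ℝ) ⊆ Set.Ioo 0 δ ∪ Set.Ici δ := by
      intro x hx
      by_cases h : x < δ
      · exact Or.inl ⟨hx, h⟩
      · exact Or.inr (le_of_not_gt h)
    refine IntegrableOn.mono_set ?_ hsplit
    apply IntegrableOn.union
    · have hpow : IntegrableOn (fun x : ℝ => M^2 * x ^ (μ-1)) (Set.Ioo 0 δ) volume :=
        ((intervalIntegral.integrableOn_Ioo_rpow_iff hδpos).2 (by linarith)).const_mul _
      refine Integrable.mono' hpow
        ((hmeas _ ((hcg1.pow 2).mul (hcr _))).mono_measure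
          (Measure.restrict_mono Set.Ioo_subset_Ioi_self le_rfl)) ?_
      rw [ae_restrict_iff' measurableSet_Ioo]
      refine Eventually.of_forall fun x hx => ?_
      have hx0 : (0:ℝ) < x := hx.1
      have h2 : (0:ℝ) ≤ x ^ (μ-1) := (Real.rpow_pos_of_pos hx0 _).le
      have h3 : |deriv g x| ≤ M :=
        le_trans (le_add_of_nonneg_left (abs_nonneg _)) (hbound x hx)
      rw [Real.norm_eq_abs, abs_of_nonneg (mul_nonneg (sq_nonneg _) h2)]
      have h4 : deriv g x ^ 2 ≤ M ^ 2 := by nlinarith [abs_nonneg (deriv g x), sq_abs (deriv g x)]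
      exact mul_le_mul_of_nonneg_right h4 h2
    · have hsub : Set.Ici δ ⊆ Set.Ioi (0:ℝ) := fun x hx => lt_of_lt_of_le hδpos hx
      refine Integrable.mono' (((hDint.mono_set hsub)).const_mul δ⁻¹)
        ((hmeas _ ((hcg1.pow 2).mul (hcr _))).mono_measure
          (Measure.restrict_mono hsub le_rfl)) ?_
      rw [ae_restrict_iff' measurableSet_Ici]
      refine Eventually.of_forall fun x hx => ?_
      have hx0 : (0:ℝ) < x := lt_of_lt_of_le hδpos hx
      have h2 : (0:ℝ) ≤ x ^ (μ-1) := (Real.rpow_pos_of_pos hx0 _).le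
      have h5 : x ^ (μ-1) = x ^ μ / x := by
        rw [Real.rpow_sub hx0, Real.rpow_one]
      have h6 : (0:ℝ) ≤ x ^ μ := (Real.rpow_pos_of_pos hx0 μ).le
      rw [Real.norm_eq_abs, abs_of_nonneg (mul_nonneg (sq_nonneg _) h2), h5]
      rw [div_eq_mul_inv]
      have h7 : x⁻¹ ≤ δ⁻¹ := inv_anti₀ hδpos hx
      have h8 : deriv g x ^ 2 * (x ^ μ * x⁻¹) ≤ deriv g x ^ 2 * (x ^ μ * δ⁻¹) := by
        apply mul_le_mul_of_nonneg_left (mul_le_mul_of_nonneg_left h7 h6) (sq_nonneg _)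
      refine le_trans h8 ?_
      have h9 : deriv g x ^ 2 * x ^ μ ≤ deriv g x ^ 2 * (x+1) * x ^ μ := by
        nlinarith [mul_nonneg (sq_nonneg (deriv g x)) h6]
      calc deriv g x ^ 2 * (x ^ μ * δ⁻¹) = δ⁻¹ * (deriv g x ^ 2 * x ^ μ) := by ring
        _ ≤ δ⁻¹ * (deriv g x ^ 2 * (x+1) * x ^ μ) := by
            exact mul_le_mul_of_nonneg_left h9 (by positivity)
  -- cross integrability
  have iC1 : IntegrableOn (fun x => deriv (deriv g) x * deriv g x * x ^ (μ+1))
      (Set.Ioi 0) volume :=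
    int_cross _ _ (μ+1) (μ+1) (μ+1) (by ring) hQint iB
      (hmeas _ ((hcg2.mul hcg1).mul (hcr _)))
  have iC2 : IntegrableOn (fun x => deriv (deriv g) x * g x * x ^ μ) (Set.Ioi 0) volume :=
    int_cross _ _ (μ+1) (μ-1) μ (by ring) hQint hGint
      (hmeas _ ((hcg2.mul hcg).mul (hcr _)))
  have iC3 : IntegrableOn (fun x => deriv (deriv g) x * deriv g x * x ^ μ)
      (Set.Ioi 0) volume :=
    int_cross _ _ (μ+1) (μ-1) μ (by ring) hQint iR
      (hmeas _ ((hcg2.mul hcg1).mul (hcr _)))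
  have iE1 : IntegrableOn (fun x => deriv g x * g x * x ^ μ) (Set.Ioi 0) volume :=
    int_cross _ _ (μ+1) (μ-1) μ (by ring) iB hGint
      (hmeas _ ((hcg1.mul hcg).mul (hcr _)))
  have iE2 : IntegrableOn (fun x => deriv g x * g x * x ^ (μ-1)) (Set.Ioi 0) volume :=
    int_cross _ _ (μ-1) (μ-1) (μ-1) (by ring) iR hGint
      (hmeas _ ((hcg1.mul hcg).mul (hcr _)))
  -- bounds near 0 for boundary terms
  have hb1 : ∀ᶠ x in nhdsWithin 0 (Set.Ioi (0:ℝ)), |deriv g x ^ 2| ≤ M^2 := by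
    filter_upwards [hM] with x hx
    have h1 : |deriv g x| ≤ M := le_trans (le_add_of_nonneg_left (abs_nonneg _)) hx
    rw [abs_of_nonneg (sq_nonneg _)]
    nlinarith [abs_nonneg (deriv g x), sq_abs (deriv g x)]
  have hb2 : ∀ᶠ x in nhdsWithin 0 (Set.Ioi (0:ℝ)), |deriv g x * g x| ≤ M^2 := by
    filter_upwards [hM] with x hx
    have h1 : |deriv g x| ≤ M := le_trans (le_add_of_nonneg_left (abs_nonneg _)) hx
    have h2 : |g x| ≤ M := le_trans (le_add_of_nonneg_right (abs_nonneg _)) hx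
    rw [abs_mul]
    nlinarith [abs_nonneg (deriv g x), abs_nonneg (g x)]
  have hb3 : ∀ᶠ x in nhdsWithin 0 (Set.Ioi (0:ℝ)), |g x ^ 2| ≤ M^2 := by
    filter_upwards [hM] with x hx
    have h2 : |g x| ≤ M := le_trans (le_add_of_nonneg_right (abs_nonneg _)) hx
    rw [abs_of_nonneg (sq_nonneg _)]
    nlinarith [abs_nonneg (g x), sq_abs (g x)]
  -- limits at infinity
  have t1 : Tendsto (fun x => deriv g x ^ 2 * x ^ (μ+1)) atTop (nhds 0) := by
    refine squeeze_zero_norm' ?_ hBtop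
    filter_upwards [eventually_gt_atTop (0:ℝ)] with x hx
    have h2 : (0:ℝ) ≤ x ^ μ * g x ^ 2 :=
      mul_nonneg (Real.rpow_pos_of_pos hx μ).le (sq_nonneg _)
    rw [Real.norm_eq_abs,
      abs_of_nonneg (mul_nonneg (sq_nonneg _) (Real.rpow_pos_of_pos hx _).le)]
    have e : deriv g x ^ 2 * x ^ (μ+1) = x ^ (μ+1) * deriv g x ^ 2 := by ring
    rw [e]; linarith
  have t2 : Tendsto (fun x => g x ^ 2 * x ^ μ) atTop (nhds 0) := by
    refine squeeze_zero_norm' ?_ hBtop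
    filter_upwards [eventually_gt_atTop (0:ℝ)] with x hx
    have h2 : (0:ℝ) ≤ x ^ (μ+1) * deriv g x ^ 2 :=
      mul_nonneg (Real.rpow_pos_of_pos hx _).le (sq_nonneg _)
    rw [Real.norm_eq_abs,
      abs_of_nonneg (mul_nonneg (sq_nonneg _) (Real.rpow_pos_of_pos hx _).le)]
    have e : g x ^ 2 * x ^ μ = x ^ μ * g x ^ 2 := by ring
    rw [e]; linarith
  have t3 : Tendsto (fun x => deriv g x ^ 2 * x ^ μ) atTop (nhds 0) := by
    refine squeeze_zero_norm' ?_ hBtop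
    filter_upwards [eventually_ge_atTop (1:ℝ)] with x hx
    have hx0 : (0:ℝ) < x := lt_of_lt_of_le zero_lt_one hx
    have hm : x ^ μ ≤ x ^ (μ+1) := Real.rpow_le_rpow_of_exponent_le hx (by linarith)
    have h2 : (0:ℝ) ≤ x ^ μ * g x ^ 2 :=
      mul_nonneg (Real.rpow_pos_of_pos hx0 μ).le (sq_nonneg _)
    rw [Real.norm_eq_abs,
      abs_of_nonneg (mul_nonneg (sq_nonneg _) (Real.rpow_pos_of_pos hx0 _).le)]
    nlinarith [mul_le_mul_of_nonneg_left hm (sq_nonneg (deriv g x))]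
  have t4 : Tendsto (fun x => deriv g x * g x * x ^ μ) atTop (nhds 0) := by
    have hhalf : Tendsto (fun x : ℝ =>
        (1/2) * (x ^ (μ+1) * deriv g x ^ 2 + x ^ μ * g x ^ 2)) atTop (nhds 0) := by
      have h := hBtop.const_mul (1/2:ℝ)
      rwa [mul_zero] at h
    refine squeeze_zero_norm' ?_ hhalf
    filter_upwards [eventually_ge_atTop (1:ℝ)] with x hx
    have hx0 : (0:ℝ) < x := lt_of_lt_of_le zero_lt_one hx
    have hm : x ^ μ ≤ x ^ (μ+1) := Real.rpow_le_rpow_of_exponent_le hx (by linarith)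
    have hμp : (0:ℝ) ≤ x ^ μ := (Real.rpow_pos_of_pos hx0 μ).le
    rw [Real.norm_eq_abs, abs_mul, abs_mul, abs_of_nonneg hμp]
    have key1 : |deriv g x| * |g x| ≤ (1/2) * (deriv g x ^ 2 + g x ^ 2) := by
      nlinarith [sq_nonneg (|deriv g x| - |g x|), sq_abs (deriv g x), sq_abs (g x)]
    have key2 : |deriv g x| * |g x| * x ^ μ ≤ (1/2) * (deriv g x ^ 2 + g x ^ 2) * x ^ μ :=
      mul_le_mul_of_nonneg_right key1 hμp
    have key3 : deriv g x ^ 2 * x ^ μ ≤ deriv g x ^ 2 * x ^ (μ+1) :=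
      mul_le_mul_of_nonneg_left hm (sq_nonneg _)
    nlinarith [key2, key3]
  -- integration by parts identities
  have ibp1 : (∫ x in Set.Ioi (0:ℝ),
      (2*(deriv (deriv g) x * deriv g x * x ^ (μ+1)) + (μ+1)*(deriv g x ^ 2 * x ^ μ))) = 0 := by
    refine ibp_zero (fun x => deriv g x ^ 2 * x ^ (μ+1)) _ (fun x hx => ?_)
      (by exact (iC1.const_mul 2).add (iP.const_mul (μ+1))) t1
      (tendsto_zero_at0 (fun x => deriv g x ^ 2) (μ+1) (by linarith) (M^2) hb1)
    have hx0 : (0:ℝ) < x := hx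
    have hp : HasDerivAt (fun y : ℝ => y ^ (μ+1)) ((μ+1) * x ^ (μ+1-1)) x :=
      Real.hasDerivAt_rpow_const (Or.inl hx0.ne')
    have h := ((hd2 x hx).pow 2).mul hp
    rw [show μ+1-1 = μ by ring] at h
    refine h.congr_deriv ?_
    simp only [Pi.pow_apply, Pi.mul_apply, Nat.cast_ofNat, show (2:ℕ)-1 = 1 from rfl, pow_one]
    ring
  have ibp2 : (∫ x in Set.Ioi (0:ℝ),
      (deriv (deriv g) x * g x * x ^ μ + deriv g x ^ 2 * x ^ μ
        + μ * (deriv g x * g x * x ^ (μ-1)))) = 0 := by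
    refine ibp_zero (fun x => deriv g x * g x * x ^ μ) _ (fun x hx => ?_)
      (by exact (iC2.add iP).add (iE2.const_mul μ)) t4
      (tendsto_zero_at0 (fun x => deriv g x * g x) μ hμ (M^2) hb2)
    have hx0 : (0:ℝ) < x := hx
    have hp : HasDerivAt (fun y : ℝ => y ^ μ) (μ * x ^ (μ-1)) x :=
      Real.hasDerivAt_rpow_const (Or.inl hx0.ne')
    have h := ((hd2 x hx).mul (hd1 x hx)).mul hp
    refine h.congr_deriv ?_
    simp only [Pi.mul_apply]
    ring
  have ibp3 : (∫ x in Set.Ioi (0:ℝ),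
      (2*(deriv g x * g x * x ^ μ) + μ * (g x ^ 2 * x ^ (μ-1)))) = 0 := by
    refine ibp_zero (fun x => g x ^ 2 * x ^ μ) _ (fun x hx => ?_)
      (by exact (iE1.const_mul 2).add (hGint.const_mul μ)) t2
      (tendsto_zero_at0 (fun x => g x ^ 2) μ hμ (M^2) hb3)
    have hx0 : (0:ℝ) < x := hx
    have hp : HasDerivAt (fun y : ℝ => y ^ μ) (μ * x ^ (μ-1)) x :=
      Real.hasDerivAt_rpow_const (Or.inl hx0.ne')
    have h := ((hd1 x hx).pow 2).mul hp
    refine h.congr_deriv ?_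
    simp only [Pi.pow_apply, Pi.mul_apply, Nat.cast_ofNat, show (2:ℕ)-1 = 1 from rfl, pow_one]
    ring
  have ibp4 : (∫ x in Set.Ioi (0:ℝ),
      (2*(deriv (deriv g) x * deriv g x * x ^ μ) + μ * (deriv g x ^ 2 * x ^ (μ-1)))) = 0 := by
    refine ibp_zero (fun x => deriv g x ^ 2 * x ^ μ) _ (fun x hx => ?_)
      (by exact (iC3.const_mul 2).add (iR.const_mul μ)) t3
      (tendsto_zero_at0 (fun x => deriv g x ^ 2) μ hμ (M^2) hb1)
    have hx0 : (0:ℝ) < x := hx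
    have hp : HasDerivAt (fun y : ℝ => y ^ μ) (μ * x ^ (μ-1)) x :=
      Real.hasDerivAt_rpow_const (Or.inl hx0.ne')
    have h := ((hd2 x hx).pow 2).mul hp
    refine h.congr_deriv ?_
    simp only [Pi.pow_apply, Pi.mul_apply, Nat.cast_ofNat, show (2:ℕ)-1 = 1 from rfl, pow_one]
    ring
  -- abbreviations for all integrals
  set Av := ∫ x in Set.Ioi (0:ℝ), deriv (deriv g) x ^ 2 * x ^ (μ+1) with hAv
  set Bv := ∫ x in Set.Ioi (0:ℝ), deriv g x ^ 2 * x ^ (μ+1) with hBv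
  set Pv := ∫ x in Set.Ioi (0:ℝ), deriv g x ^ 2 * x ^ μ with hPv
  set Rv := ∫ x in Set.Ioi (0:ℝ), deriv g x ^ 2 * x ^ (μ-1) with hRv
  set Gv := ∫ x in Set.Ioi (0:ℝ), g x ^ 2 * x ^ (μ-1) with hGv
  set C1v := ∫ x in Set.Ioi (0:ℝ), deriv (deriv g) x * deriv g x * x ^ (μ+1) with hC1v
  set C2v := ∫ x in Set.Ioi (0:ℝ), deriv (deriv g) x * g x * x ^ μ with hC2v
  set C3v := ∫ x in Set.Ioi (0:ℝ), deriv (deriv g) x * deriv g x * x ^ μ with hC3v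
  set E1v := ∫ x in Set.Ioi (0:ℝ), deriv g x * g x * x ^ μ with hE1v
  set E2v := ∫ x in Set.Ioi (0:ℝ), deriv g x * g x * x ^ (μ-1) with hE2v
  -- split the ibp integrals
  have I1 : 2 * C1v + (μ+1) * Pv = 0 := by
    rw [hC1v, hPv, ← integral_const_mul, ← integral_const_mul,
      ← integral_add (iC1.const_mul 2) (iP.const_mul (μ+1))]
    exact ibp1
  have j2 : IntegrableOn (fun x => deriv (deriv g) x * g x * x ^ μ + deriv g x ^ 2 * x ^ μ)
      (Set.Ioi 0) volume := iC2.add iP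
  have I2 : C2v + Pv + μ * E2v = 0 := by
    rw [integral_add j2 (iE2.const_mul μ), integral_add iC2 iP, integral_const_mul] at ibp2
    rw [hC2v, hPv, hE2v]
    linarith [ibp2]
  have I3 : 2 * E1v + μ * Gv = 0 := by
    rw [hE1v, hGv, ← integral_const_mul, ← integral_const_mul,
      ← integral_add (iE1.const_mul 2) (hGint.const_mul μ)]
    exact ibp3
  have I4 : 2 * C3v + μ * Rv = 0 := by
    rw [hC3v, hRv, ← integral_const_mul, ← integral_const_mul,
      ← integral_add (iC3.const_mul 2) (iR.const_mul μ)]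
    exact ibp4
  -- the two key functions
  set F1 : ℝ → ℝ := fun x => (deriv (deriv g) x + μ * deriv g x / x) * x ^ ((μ+1)/2)
    with hF1def
  set F2 : ℝ → ℝ := fun x => (x * deriv g x - a * g x) * x ^ ((μ-1)/2) with hF2def
  -- pointwise expansions on Ioi 0
  have eF1 : Set.EqOn (fun x => F1 x ^ 2)
      (fun x => deriv (deriv g) x ^ 2 * x ^ (μ+1)
        + (2*μ) * (deriv (deriv g) x * deriv g x * x ^ μ)
        + μ^2 * (deriv g x ^ 2 * x ^ (μ-1))) (Set.Ioi 0) := by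
    intro x hx
    have hx0 : (0:ℝ) < x := hx
    have hxne : x ≠ 0 := hx0.ne'
    have ex1 : x ^ (μ-1) * x = x ^ μ := by
      have h := Real.rpow_add hx0 (μ-1) 1
      rw [Real.rpow_one] at h
      rw [← h]; ring_nf
    have ex2 : x ^ μ * x = x ^ (μ+1) := by
      have h := Real.rpow_add hx0 μ 1
      rw [Real.rpow_one] at h
      rw [← h]
    have ex3 : x ^ ((μ+1)/2) * x ^ ((μ+1)/2) = x ^ (μ+1) := by
      rw [← Real.rpow_add hx0]; ring_nf
    simp only [hF1def]
    have e0 : ((deriv (deriv g) x + μ * deriv g x / x) * x ^ ((μ+1)/2)) ^ 2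
        = (deriv (deriv g) x + μ * deriv g x / x) ^ 2 * (x ^ ((μ+1)/2) * x ^ ((μ+1)/2)) := by
      ring
    rw [e0, ex3, ← ex2, ← ex1]
    field_simp
    ring
  have eF2 : Set.EqOn (fun x => F2 x ^ 2)
      (fun x => deriv g x ^ 2 * x ^ (μ+1)
        + (-(2*a)) * (deriv g x * g x * x ^ μ)
        + a^2 * (g x ^ 2 * x ^ (μ-1))) (Set.Ioi 0) := by
    intro x hx
    have hx0 : (0:ℝ) < x := hx
    have ex1 : x ^ (μ-1) * x = x ^ μ := by
      have h := Real.rpow_add hx0 (μ-1) 1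
      rw [Real.rpow_one] at h
      rw [← h]; ring_nf
    have ex2 : x ^ μ * x = x ^ (μ+1) := by
      have h := Real.rpow_add hx0 μ 1
      rw [Real.rpow_one] at h
      rw [← h]
    have ex4 : x ^ ((μ-1)/2) * x ^ ((μ-1)/2) = x ^ (μ-1) := by
      rw [← Real.rpow_add hx0]; ring_nf
    simp only [hF2def]
    have e0 : ((x * deriv g x - a * g x) * x ^ ((μ-1)/2)) ^ 2
        = (x * deriv g x - a * g x) ^ 2 * (x ^ ((μ-1)/2) * x ^ ((μ-1)/2)) := by
      ring
    rw [e0, ex4, ← ex2, ← ex1]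
    ring
  have eF12 : Set.EqOn (fun x => F1 x * F2 x)
      (fun x => deriv (deriv g) x * deriv g x * x ^ (μ+1)
        + (-a) * (deriv (deriv g) x * g x * x ^ μ)
        + μ * (deriv g x ^ 2 * x ^ μ)
        + (-(a*μ)) * (deriv g x * g x * x ^ (μ-1))) (Set.Ioi 0) := by
    intro x hx
    have hx0 : (0:ℝ) < x := hx
    have hxne : x ≠ 0 := hx0.ne'
    have ex1 : x ^ (μ-1) * x = x ^ μ := by
      have h := Real.rpow_add hx0 (μ-1) 1
      rw [Real.rpow_one] at h
      rw [← h]; ring_nf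
    have ex2 : x ^ μ * x = x ^ (μ+1) := by
      have h := Real.rpow_add hx0 μ 1
      rw [Real.rpow_one] at h
      rw [← h]
    have ex5 : x ^ ((μ+1)/2) * x ^ ((μ-1)/2) = x ^ μ := by
      rw [← Real.rpow_add hx0]; ring_nf
    simp only [hF1def, hF2def]
    have e0 : ((deriv (deriv g) x + μ * deriv g x / x) * x ^ ((μ+1)/2))
        * ((x * deriv g x - a * g x) * x ^ ((μ-1)/2))
        = (deriv (deriv g) x + μ * deriv g x / x) * (x * deriv g x - a * g x)
          * (x ^ ((μ+1)/2) * x ^ ((μ-1)/2)) := by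
      ring
    rw [e0, ex5, ← ex2, ← ex1]
    field_simp
    ring
  -- integrability of the expansions
  have iF1sq : IntegrableOn (fun x => F1 x ^ 2) (Set.Ioi 0) volume := by
    refine IntegrableOn.congr_fun ?_ eF1.symm measurableSet_Ioi
    exact (hQint.add (iC3.const_mul (2*μ))).add (iR.const_mul (μ^2))
  have iF2sq : IntegrableOn (fun x => F2 x ^ 2) (Set.Ioi 0) volume := by
    refine IntegrableOn.congr_fun ?_ eF2.symm measurableSet_Ioi
    exact (iB.add (iE1.const_mul _)).add (hGint.const_mul _)
  have iF12 : IntegrableOn (fun x => F1 x * F2 x) (Set.Ioi 0) volume := by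
    refine IntegrableOn.congr_fun ?_ eF12.symm measurableSet_Ioi
    exact ((iC1.add (iC2.const_mul _)).add (iP.const_mul _)).add (iE2.const_mul _)
  -- values of the three integrals
  have jF1 : IntegrableOn (fun x => deriv (deriv g) x ^ 2 * x ^ (μ+1)
      + (2*μ) * (deriv (deriv g) x * deriv g x * x ^ μ)) (Set.Ioi 0) volume :=
    hQint.add (iC3.const_mul (2*μ))
  have vF1 : ∫ x in Set.Ioi (0:ℝ), F1 x ^ 2 = Av := by
    rw [setIntegral_congr_fun measurableSet_Ioi eF1]
    rw [integral_add jF1 (iR.const_mul (μ^2)),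
      integral_add hQint (iC3.const_mul (2*μ)), integral_const_mul, integral_const_mul]
    rw [← hAv, ← hC3v, ← hRv]
    linear_combination μ * I4
  have jF2 : IntegrableOn (fun x => deriv g x ^ 2 * x ^ (μ+1)
      + (-(2*a)) * (deriv g x * g x * x ^ μ)) (Set.Ioi 0) volume :=
    iB.add (iE1.const_mul _)
  have vF2 : ∫ x in Set.Ioi (0:ℝ), F2 x ^ 2 = Bv - ε * Gv := by
    rw [setIntegral_congr_fun measurableSet_Ioi eF2]
    rw [integral_add jF2 (hGint.const_mul _),
      integral_add iB (iE1.const_mul _), integral_const_mul, integral_const_mul]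
    rw [← hBv, ← hE1v, ← hGv]
    linear_combination (-a) * I3 + Gv * ha
  have jA : IntegrableOn (fun x => deriv (deriv g) x * deriv g x * x ^ (μ+1)
      + (-a) * (deriv (deriv g) x * g x * x ^ μ)) (Set.Ioi 0) volume :=
    iC1.add (iC2.const_mul _)
  have jB : IntegrableOn (fun x => (deriv (deriv g) x * deriv g x * x ^ (μ+1)
      + (-a) * (deriv (deriv g) x * g x * x ^ μ)) + μ * (deriv g x ^ 2 * x ^ μ))
      (Set.Ioi 0) volume := jA.add (iP.const_mul _)
  have vF12 : ∫ x in Set.Ioi (0:ℝ), F1 x * F2 x = (a + (μ-1)/2) * Pv := by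
    rw [setIntegral_congr_fun measurableSet_Ioi eF12]
    rw [integral_add jB (iE2.const_mul _),
      integral_add jA (iP.const_mul _),
      integral_add iC1 (iC2.const_mul _),
      integral_const_mul, integral_const_mul, integral_const_mul]
    rw [← hC1v, ← hC2v, ← hPv, ← hE2v]
    linear_combination (1/2) * I1 + (-a) * I2
  -- Cauchy–Schwarz
  have hcs := integral_cs F1 F2 (Set.Ioi 0) iF1sq iF2sq iF12
  rw [vF1, vF2, vF12] at hcs
  -- identify Q, P0, P1
  have hQ : Q μ g = Av := hAv.symm ▸ rfl
  have hP0 : P0 μ g = Pv := hPv.symm ▸ rfl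
  have hP1 : P1 μ ε g = Bv - ε * Gv := by
    have e : Set.EqOn (fun x => (x ^ 2 * (deriv g x) ^ 2 - ε * (g x) ^ 2) * x ^ (μ-1))
        (fun x => deriv g x ^ 2 * x ^ (μ+1) - ε * (g x ^ 2 * x ^ (μ-1))) (Set.Ioi 0) := by
      intro x hx
      have hx0 : (0:ℝ) < x := hx
      have ex1 : x ^ (μ-1) * x = x ^ μ := by
        have h := Real.rpow_add hx0 (μ-1) 1
        rw [Real.rpow_one] at h
        rw [← h]; ring_nf
      have ex2 : x ^ μ * x = x ^ (μ+1) := by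
        have h := Real.rpow_add hx0 μ 1
        rw [Real.rpow_one] at h
        rw [← h]
      simp only
      rw [← ex2, ← ex1]
      ring
    show (∫ x in Set.Ioi (0:ℝ), (x ^ 2 * (deriv g x) ^ 2 - ε * (g x) ^ 2) * x ^ (μ-1))
      = Bv - ε * Gv
    rw [setIntegral_congr_fun measurableSet_Ioi e,
      integral_sub iB (hGint.const_mul ε), integral_const_mul, ← hBv, ← hGv]
  rw [hQ, hP0, hP1]
  calc (1/4) * (s + 1) ^ 2 * Pv ^ 2 = ((a + (μ-1)/2) * Pv) ^ 2 := by
        rw [hadef]; ring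
    _ ≤ Av * (Bv - ε * Gv) := hcs
end
end

section
/- Let μ > 0 and ε > 0 with ε < μ²/4, and set b = (μ − √(μ²−4ε))/2. Let g : (0,∞) → ℝ be a smooth function satisfying the boundary conditions (B) and having finite D_μ-norm. Then the identity ∫₀^∞ (x g'' + (x+μ) g' + (μ−b) g)² x^{μ−1} dx = Q[g] + P₁[g] − (√(μ²−4ε)+1) P₀[g] holds. -/
open MeasureTheory Filter

noncomputable section

lemma ftc_Ioi_zero (F F' : ℝ → ℝ)
    (hderiv : ∀ x ∈ Set.Ioi (0:ℝ), HasDerivAt F (F' x) x)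
    (hint : IntegrableOn F' (Set.Ioi 0) volume)
    (h0 : Tendsto F (nhdsWithin 0 (Set.Ioi 0)) (nhds 0))
    (htop : Tendsto F atTop (nhds 0)) :
    ∫ x in Set.Ioi (0:ℝ), F' x = 0 := by
  have hIoi1 : ∫ x in Set.Ioi (1:ℝ), F' x = 0 - F 1 := by
    apply integral_Ioi_of_hasDerivAt_of_tendsto
    · exact (hderiv 1 (by norm_num)).continuousAt.continuousWithinAt
    · exact fun x hx => hderiv x (Set.mem_Ioi.2 (lt_trans one_pos hx))
    · exact hint.mono_set (fun x hx => Set.mem_Ioi.2 (lt_trans one_pos hx))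
    · exact htop
  set s : ℕ → Set ℝ := fun n => Set.Ioc (1/(n+1) : ℝ) 1 with hs
  have hpos : ∀ n : ℕ, (0:ℝ) < 1/(n+1) := by
    intro n; positivity
  have hmono : Monotone s := by
    intro n m hnm
    apply Set.Ioc_subset_Ioc _ le_rfl
    have hm : (n:ℝ) ≤ m := Nat.cast_le.2 hnm
    rw [div_le_div_iff₀ (by positivity : (0:ℝ) < (m:ℝ)+1) (by positivity : (0:ℝ) < (n:ℝ)+1)]
    linarith
  have hunion : (⋃ n, s n) = Set.Ioc (0:ℝ) 1 := by
    ext x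
    simp only [Set.mem_iUnion, Set.mem_Ioc, hs]
    constructor
    · rintro ⟨n, h1, h2⟩; exact ⟨lt_trans (hpos n) h1, h2⟩
    · rintro ⟨h1, h2⟩
      obtain ⟨n, hn⟩ := exists_nat_one_div_lt h1
      exact ⟨n, by simpa using hn, h2⟩
  have hintIoc : IntegrableOn F' (Set.Ioc 0 1) volume :=
    hint.mono_set Set.Ioc_subset_Ioi_self
  have hlim1 : Tendsto (fun n : ℕ => ∫ x in s n, F' x) atTop
      (nhds (∫ x in Set.Ioc (0:ℝ) 1, F' x)) := by
    have := tendsto_setIntegral_of_monotone (fun n => measurableSet_Ioc) hmono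
      (by rw [hunion]; exact hintIoc)
    rwa [hunion] at this
  have heval : ∀ n : ℕ, ∫ x in s n, F' x = F 1 - F (1/(n+1)) := by
    intro n
    have hle : (1/(n+1):ℝ) ≤ 1 := by
      rw [div_le_one (by positivity)]; linarith [Nat.cast_nonneg (α := ℝ) n]
    have hii : IntervalIntegrable F' volume (1/(n+1):ℝ) 1 := by
      rw [intervalIntegrable_iff_integrableOn_Ioc_of_le hle]
      exact hint.mono_set (fun x hx => lt_trans (hpos n) hx.1)
    have := intervalIntegral.integral_eq_sub_of_hasDerivAt (f := F) (f' := F')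
      (fun x hx => hderiv x (lt_of_lt_of_le (hpos n) ((Set.uIcc_of_le hle ▸ hx).1))) hii
    rw [← this, intervalIntegral.integral_of_le hle]
  have hlim2 : Tendsto (fun n : ℕ => ∫ x in s n, F' x) atTop (nhds (F 1 - 0)) := by
    simp only [heval]
    apply Tendsto.sub tendsto_const_nhds
    apply h0.comp
    rw [tendsto_nhdsWithin_iff]
    constructor
    · exact tendsto_one_div_add_atTop_nhds_zero_nat
    · exact Filter.Eventually.of_forall (fun n => hpos n)
  have hIoc : ∫ x in Set.Ioc (0:ℝ) 1, F' x = F 1 - 0 := tendsto_nhds_unique hlim1 hlim2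
  have hsplit : ∫ x in Set.Ioi (0:ℝ), F' x =
      (∫ x in Set.Ioc (0:ℝ) 1, F' x) + ∫ x in Set.Ioi (1:ℝ), F' x := by
    rw [← setIntegral_union (Set.Ioc_disjoint_Ioi le_rfl) measurableSet_Ioi hintIoc
      (hint.mono_set (fun x hx => Set.mem_Ioi.2 (lt_trans one_pos hx))), Set.Ioc_union_Ioi_eq_Ioi zero_le_one]
  rw [hsplit, hIoc, hIoi1]; ring

set_option maxHeartbeats 2000000 in
/-- The key integral identity:
`∫₀^∞ (x g'' + (x+μ) g' + (μ−b) g)² x^{μ−1} dx = Q[g] + P₁[g] − (√(μ²−4ε)+1) P₀[g]`,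
where `b = (μ − √(μ²−4ε))/2`. -/
theorem stmt_13 (μ ε : ℝ) (hμ : 0 < μ) (hε : 0 < ε) (hεμ : ε < μ ^ 2 / 4)
    (b : ℝ) (hb : b = (μ - Real.sqrt (μ ^ 2 - 4 * ε)) / 2)
    (g : ℝ → ℝ) (hg : ContDiffOn ℝ (⊤ : ℕ∞) g (Set.Ioi 0))
    (hB : BoundaryB μ g) (hD : FiniteDmu μ g) :
    (∫ x in Set.Ioi (0 : ℝ),
        (x * deriv (deriv g) x + (x + μ) * deriv g x + (μ - b) * g x) ^ 2 * x ^ (μ - 1)) =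
      Q μ g + P1 μ ε g - (Real.sqrt (μ ^ 2 - 4 * ε) + 1) * P0 μ g := by
  obtain ⟨hQ, hP, hG2⟩ := hD
  obtain ⟨⟨M, hM⟩, hT⟩ := hB
  set s := Real.sqrt (μ ^ 2 - 4 * ε) with hsdef
  have hs0 : 0 ≤ s := Real.sqrt_nonneg _
  have hs2 : s ^ 2 = μ ^ 2 - 4 * ε := Real.sq_sqrt (by nlinarith)
  set c := μ - b with hcdef
  -- derivative facts
  have hopen : IsOpen (Set.Ioi (0:ℝ)) := isOpen_Ioi
  have hgd : ∀ x ∈ Set.Ioi (0:ℝ), HasDerivAt g (deriv g x) x := fun x hx =>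
    ((hg.differentiableOn (by simp)).differentiableAt (hopen.mem_nhds hx)).hasDerivAt
  have hg1 : ContDiffOn ℝ (⊤ : ℕ∞) (deriv g) (Set.Ioi 0) := hg.deriv_of_isOpen hopen (by exact_mod_cast le_top)
  have hg1d : ∀ x ∈ Set.Ioi (0:ℝ), HasDerivAt (deriv g) (deriv (deriv g) x) x := fun x hx =>
    ((hg1.differentiableOn (by simp)).differentiableAt (hopen.mem_nhds hx)).hasDerivAt
  have hgc : ContinuousOn g (Set.Ioi 0) := hg.continuousOn
  have hg1c : ContinuousOn (deriv g) (Set.Ioi 0) := hg1.continuousOn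
  have hg2c : ContinuousOn (deriv (deriv g)) (Set.Ioi 0) :=
    (hg1.deriv_of_isOpen (m := 0) hopen (by simp)).continuousOn
  have hrpowc : ∀ r : ℝ, ContinuousOn (fun x : ℝ => x ^ r) (Set.Ioi 0) := fun r x hx =>
    (Real.continuousAt_rpow_const x r (Or.inl (ne_of_gt hx))).continuousWithinAt
  -- rpow algebra
  have e1 : ∀ x : ℝ, 0 < x → x ^ μ = x ^ (μ-1) * x := by
    intro x hx
    conv_lhs => rw [show μ = μ - 1 + 1 by ring]
    rw [Real.rpow_add_one (ne_of_gt hx)]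
  have e2 : ∀ x : ℝ, 0 < x → x ^ (μ+1) = x ^ (μ-1) * x ^ (2:ℕ) := by
    intro x hx
    rw [Real.rpow_add_one (ne_of_gt hx), e1 x hx]
    ring
  -- integrability helper
  have idomS : ∀ (S : Set ℝ), MeasurableSet S → S ⊆ Set.Ioi 0 → ∀ (f h : ℝ → ℝ),
      IntegrableOn h S volume → ContinuousOn f (Set.Ioi 0) →
      (∀ x ∈ S, |f x| ≤ h x) → IntegrableOn f S volume := by
    intro S hSm hSs f h hh hc hbnd
    refine Integrable.mono hh ((hc.mono hSs).aestronglyMeasurable hSm) ?_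
    rw [ae_restrict_iff' hSm]
    refine Filter.Eventually.of_forall fun x hx => ?_
    rw [Real.norm_eq_abs, Real.norm_eq_abs]
    exact le_trans (hbnd x hx) (le_abs_self _)
  have idom : ∀ (f h : ℝ → ℝ), IntegrableOn h (Set.Ioi 0) volume →
      ContinuousOn f (Set.Ioi 0) →
      (∀ x ∈ Set.Ioi (0:ℝ), |f x| ≤ h x) → IntegrableOn f (Set.Ioi 0) volume :=
    idomS (Set.Ioi 0) measurableSet_Ioi subset_rfl
  -- basic integrable pieces
  have hI1 : IntegrableOn (fun x => (deriv g x)^2 * x^(μ+1)) (Set.Ioi 0) volume := by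
    refine idom _ _ hP ((hg1c.pow 2).mul (hrpowc (μ+1))) ?_
    intro x hx
    have hx0 : (0:ℝ) < x := hx
    have h1 : x^(μ+1) = x^μ * x := Real.rpow_add_one (ne_of_gt hx0) μ
    have h2 : (0:ℝ) ≤ x^μ := Real.rpow_nonneg hx0.le μ
    rw [abs_of_nonneg (mul_nonneg (sq_nonneg _) (Real.rpow_nonneg hx0.le _)), h1]
    nlinarith [mul_nonneg (sq_nonneg (deriv g x)) h2]
  have hI2 : IntegrableOn (fun x => (deriv g x)^2 * x^μ) (Set.Ioi 0) volume := by
    refine idom _ _ hP ((hg1c.pow 2).mul (hrpowc μ)) ?_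
    intro x hx
    have hx0 : (0:ℝ) < x := hx
    have h2 : (0:ℝ) ≤ x^μ := Real.rpow_nonneg hx0.le μ
    rw [abs_of_nonneg (mul_nonneg (sq_nonneg _) h2)]
    nlinarith [mul_nonneg (mul_nonneg (sq_nonneg (deriv g x)) hx0.le) h2]
  -- extra piece near 0
  obtain ⟨δ, hδpos, hδ⟩ : ∃ δ > 0, ∀ x ∈ Set.Ioo (0:ℝ) δ, |g x| + |deriv g x| ≤ M := by
    rw [eventually_nhdsWithin_iff, Metric.eventually_nhds_iff] at hM
    obtain ⟨δ, hδpos, h⟩ := hM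
    refine ⟨δ, hδpos, fun x hx => h ?_ hx.1⟩
    rw [Real.dist_eq, sub_zero, abs_of_pos hx.1]
    exact hx.2
  have hI3 : IntegrableOn (fun x => (deriv g x)^2 * x^(μ-1)) (Set.Ioi 0) volume := by
    have hIoo : IntegrableOn (fun x => (deriv g x)^2 * x^(μ-1)) (Set.Ioo 0 δ) volume := by
      refine idomS (Set.Ioo 0 δ) measurableSet_Ioo (fun x hx => hx.1) _
        (fun x => M^2 * x^(μ-1))
        (((intervalIntegral.integrableOn_Ioo_rpow_iff hδpos).2 (by linarith)).const_mul _)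
        ((hg1c.pow 2).mul (hrpowc (μ-1))) ?_
      intro x hx
      have hx0 : (0:ℝ) < x := hx.1
      have hp : (0:ℝ) ≤ x^(μ-1) := Real.rpow_nonneg hx0.le _
      have h1 := hδ x hx
      have h2 : |deriv g x| ≤ M := by linarith [abs_nonneg (g x)]
      have h3 : (deriv g x)^2 ≤ M^2 := by nlinarith [abs_nonneg (deriv g x), sq_abs (deriv g x)]
      rw [abs_of_nonneg (mul_nonneg (sq_nonneg _) hp)]
      exact mul_le_mul_of_nonneg_right h3 hp
    have hIci : IntegrableOn (fun x => (deriv g x)^2 * x^(μ-1)) (Set.Ici δ) volume := by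
      refine idomS (Set.Ici δ) measurableSet_Ici
        (fun x hx => lt_of_lt_of_le hδpos hx) _
        (fun x => ((deriv g x)^2 * (x+1) * x^μ)/δ)
        ((hP.mono_set (fun x hx => lt_of_lt_of_le hδpos hx)).div_const δ)
        ((hg1c.pow 2).mul (hrpowc (μ-1))) ?_
      intro x hx
      have hx0 : (0:ℝ) < x := lt_of_lt_of_le hδpos hx
      have hp : (0:ℝ) ≤ x^(μ-1) := Real.rpow_nonneg hx0.le _
      rw [abs_of_nonneg (mul_nonneg (sq_nonneg _) hp), le_div_iff₀ hδpos, e1 x hx0]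
      nlinarith [mul_nonneg (mul_nonneg (sq_nonneg (deriv g x)) hp) (sub_nonneg.2 hx),
        mul_nonneg (mul_nonneg (sq_nonneg (deriv g x)) hp) (sq_nonneg x)]
    exact (hIoo.union hIci).mono_set (fun x hx => by
      rcases lt_or_ge x δ with h|h
      · exact Or.inl ⟨hx, h⟩
      · exact Or.inr h)
  -- cross terms
  have hJ1 : IntegrableOn (fun x => deriv (deriv g) x * deriv g x * x^(μ+1)) (Set.Ioi 0) volume := by
    refine idom _ _ (hQ.add hI1) ((hg2c.mul hg1c).mul (hrpowc (μ+1))) ?_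
    intro x hx
    have hp : (0:ℝ) ≤ x ^ (μ+1) := Real.rpow_nonneg (le_of_lt hx) _
    simp only [Pi.add_apply]
    rw [abs_mul, abs_mul, abs_of_nonneg hp]
    nlinarith [mul_nonneg (sq_nonneg (|deriv (deriv g) x| - |deriv g x|)) hp,
      sq_abs (deriv (deriv g) x), sq_abs (deriv g x)]
  have crossbound : ∀ (u v : ℝ → ℝ) (r a e : ℝ), a + e = 2*r →
      ∀ x ∈ Set.Ioi (0:ℝ), |u x * v x * x^r| ≤ (u x)^2 * x^a + (v x)^2 * x^e := by
    intro u v r a e hae x hx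
    have hx0 : (0:ℝ) < x := hx
    set p := x ^ (a/2) with hpdef
    set q := x ^ (e/2) with hqdef
    have hp0 : (0:ℝ) ≤ p := Real.rpow_nonneg hx0.le _
    have hq0 : (0:ℝ) ≤ q := Real.rpow_nonneg hx0.le _
    have hpq : x ^ r = p * q := by
      rw [hpdef, hqdef, ← Real.rpow_add hx0]
      congr 1; linarith
    have hpp : x ^ a = p * p := by
      rw [hpdef, ← Real.rpow_add hx0]; congr 1; ring
    have hqq : x ^ e = q * q := by
      rw [hqdef, ← Real.rpow_add hx0]; congr 1; ring
    rw [abs_mul, abs_mul, abs_of_nonneg (Real.rpow_nonneg hx0.le r), hpq, hpp, hqq]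
    nlinarith [sq_nonneg (|u x| * p - |v x| * q), sq_abs (u x), sq_abs (v x),
      mul_nonneg (abs_nonneg (u x)) hp0, mul_nonneg (abs_nonneg (v x)) hq0]
  have hJ3 : IntegrableOn (fun x => deriv (deriv g) x * deriv g x * x^μ) (Set.Ioi 0) volume := by
    refine idom _ _ (hQ.add hI3) ((hg2c.mul hg1c).mul (hrpowc μ)) ?_
    intro x hx
    simpa only [Pi.add_apply] using crossbound _ _ μ (μ+1) (μ-1) (by ring) x hx
  have hJ4 : IntegrableOn (fun x => deriv (deriv g) x * g x * x^μ) (Set.Ioi 0) volume := by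
    refine idom _ _ (hQ.add hG2) ((hg2c.mul hgc).mul (hrpowc μ)) ?_
    intro x hx
    simpa only [Pi.add_apply] using crossbound _ _ μ (μ+1) (μ-1) (by ring) x hx
  have hJ5 : IntegrableOn (fun x => deriv g x * g x * x^μ) (Set.Ioi 0) volume := by
    refine idom _ _ (hI1.add hG2) ((hg1c.mul hgc).mul (hrpowc μ)) ?_
    intro x hx
    simpa only [Pi.add_apply] using crossbound _ _ μ (μ+1) (μ-1) (by ring) x hx
  have hJ6 : IntegrableOn (fun x => deriv g x * g x * x^(μ-1)) (Set.Ioi 0) volume := by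
    refine idom _ _ (hI3.add hG2) ((hg1c.mul hgc).mul (hrpowc (μ-1))) ?_
    intro x hx
    simpa only [Pi.add_apply] using crossbound _ _ (μ-1) (μ-1) (μ-1) (by ring) x hx
  -- the boundary function and its derivative
  set F : ℝ → ℝ := fun y => (deriv g y)^2 * y^(μ+1) + μ * ((deriv g y)^2 * y^μ)
      + (2*c) * ((deriv g y * g y) * y^μ) + c * ((g y)^2 * y^μ) with hFdef
  set Fd : ℝ → ℝ := fun y => 2 * (deriv (deriv g) y * deriv g y * y^(μ+1))
      + (μ+1) * ((deriv g y)^2 * y^μ)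
      + (2*μ) * (deriv (deriv g) y * deriv g y * y^μ)
      + μ^2 * ((deriv g y)^2 * y^(μ-1))
      + (2*c) * (deriv (deriv g) y * g y * y^μ)
      + (2*c) * ((deriv g y)^2 * y^μ)
      + (2*c*μ) * (deriv g y * g y * y^(μ-1))
      + (2*c) * (deriv g y * g y * y^μ)
      + (c*μ) * ((g y)^2 * y^(μ-1)) with hFddef
  have hFderiv : ∀ x ∈ Set.Ioi (0:ℝ), HasDerivAt F (Fd x) x := by
    intro x hx
    have hxne : x ≠ 0 := ne_of_gt hx
    have hR0 : HasDerivAt (fun y:ℝ => y ^ μ) (μ * x^(μ-1)) x :=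
      Real.hasDerivAt_rpow_const (Or.inl hxne)
    have hR1 : HasDerivAt (fun y:ℝ => y ^ (μ+1)) ((μ+1) * x^μ) x := by
      have := Real.hasDerivAt_rpow_const (p := μ+1) (x := x) (Or.inl hxne)
      simpa using this
    have h1 := ((hg1d x hx).pow 2).mul hR1
    have h2 := (((hg1d x hx).pow 2).mul hR0).const_mul μ
    have h3 := (((hg1d x hx).mul (hgd x hx)).mul hR0).const_mul (2*c)
    have h4 := (((hgd x hx).pow 2).mul hR0).const_mul c
    have h := ((h1.add h2).add h3).add h4
    refine h.congr_deriv ?_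
    simp only [hFddef, Pi.pow_apply, Pi.mul_apply]
    push_cast
    ring
  have hFdint : IntegrableOn Fd (Set.Ioi 0) volume := by
    simp only [hFddef]
    exact ((((((((hJ1.const_mul 2).add (hI2.const_mul _)).add (hJ3.const_mul _)).add
      (hI3.const_mul _)).add (hJ4.const_mul _)).add (hI2.const_mul _)).add
      (hJ6.const_mul _)).add (hJ5.const_mul _)).add (hG2.const_mul _)
  -- boundary limits
  have habsmul : ∀ a b : ℝ, |a*b| ≤ (a^2+b^2)/2 := by
    intro a b
    rw [abs_mul]
    nlinarith [sq_nonneg (|a|-|b|), sq_abs a, sq_abs b, abs_nonneg a, abs_nonneg b]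
  have habsF : ∀ x : ℝ, 0 < x → |deriv g x| ≤ M → |g x| ≤ M →
      |F x| ≤ M^2 * x^(μ+1) + (μ + 3*|c|) * (M^2 * x^μ) := by
    intro x hx0 h1 h2
    have hp : (0:ℝ) ≤ x^μ := Real.rpow_nonneg hx0.le _
    have hq : (0:ℝ) ≤ x^(μ+1) := Real.rpow_nonneg hx0.le _
    have hM0 : 0 ≤ M := le_trans (abs_nonneg _) h1
    have hA : (deriv g x)^2 ≤ M^2 := by nlinarith [abs_nonneg (deriv g x), sq_abs (deriv g x)]
    have hB : (g x)^2 ≤ M^2 := by nlinarith [abs_nonneg (g x), sq_abs (g x)]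
    have hC : |deriv g x * g x| ≤ M^2 := by
      rw [abs_mul]; nlinarith [abs_nonneg (deriv g x), abs_nonneg (g x)]
    have hcab : |c * (deriv g x * g x)| ≤ |c| * M^2 := by
      rw [abs_mul]; exact mul_le_mul_of_nonneg_left hC (abs_nonneg c)
    obtain ⟨hcab1, hcab2⟩ := abs_le.1 hcab
    have hcg : |c * (g x)^2| ≤ |c| * M^2 := by
      rw [abs_mul, abs_of_nonneg (sq_nonneg (g x))]
      exact mul_le_mul_of_nonneg_left hB (abs_nonneg c)
    obtain ⟨hcg1, hcg2⟩ := abs_le.1 hcg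
    rw [abs_le]
    have e3 : F x = (deriv g x)^2 * x^(μ+1) + μ * ((deriv g x)^2 * x^μ)
        + 2 * (c * (deriv g x * g x) * x^μ) + (c * (g x)^2) * x^μ := by
      simp only [hFdef]; ring
    constructor
    · rw [e3]
      nlinarith [mul_le_mul_of_nonneg_right hcab1 hp, mul_le_mul_of_nonneg_right hcg1 hp,
        mul_nonneg (sq_nonneg (deriv g x)) hq, mul_nonneg (sq_nonneg (deriv g x)) hp,
        mul_nonneg (sq_nonneg M) hq, mul_nonneg (sq_nonneg M) hp, hμ.le, abs_nonneg c,
        mul_nonneg hμ.le (mul_nonneg (sq_nonneg (deriv g x)) hp),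
        mul_nonneg hμ.le (mul_nonneg (sq_nonneg M) hp)]
    · rw [e3]
      nlinarith [mul_le_mul_of_nonneg_right hcab2 hp, mul_le_mul_of_nonneg_right hcg2 hp,
        mul_le_mul_of_nonneg_right hA hq, mul_le_mul_of_nonneg_right hA hp,
        mul_nonneg (sq_nonneg M) hp, hμ.le, abs_nonneg c,
        mul_nonneg hμ.le (mul_nonneg (sq_nonneg M) hp),
        mul_le_mul_of_nonneg_left (mul_le_mul_of_nonneg_right hA hp) hμ.le]
  have hxμ0 : Tendsto (fun x:ℝ => x ^ μ) (nhdsWithin 0 (Set.Ioi 0)) (nhds 0) := by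
    have h : Tendsto (fun x:ℝ => x ^ μ) (nhdsWithin 0 (Set.Ioi 0)) (nhds ((0:ℝ)^μ)) :=
      (Real.continuousAt_rpow_const 0 μ (Or.inr hμ.le)).continuousWithinAt (s := Set.Ioi 0)
    rwa [Real.zero_rpow (ne_of_gt hμ)] at h
  have hF0 : Tendsto F (nhdsWithin 0 (Set.Ioi 0)) (nhds 0) := by
    have hbnd : ∀ᶠ x in nhdsWithin 0 (Set.Ioi (0:ℝ)),
        ‖F x‖ ≤ ((1+μ+3*|c|) * M^2) * x^μ := by
      filter_upwards [hM, self_mem_nhdsWithin,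
        Ioo_mem_nhdsGT_of_mem (Set.left_mem_Ico.2 zero_lt_one)] with x hx1 hx2 hx3
      have hx0 : (0:ℝ) < x := hx2
      have hg1M : |deriv g x| ≤ M := by linarith [abs_nonneg (g x)]
      have hgM : |g x| ≤ M := by linarith [abs_nonneg (deriv g x)]
      have hq : x^(μ+1) ≤ x^μ :=
        Real.rpow_le_rpow_of_exponent_ge hx0 hx3.2.le (by linarith)
      have := habsF x hx0 hg1M hgM
      rw [Real.norm_eq_abs]
      nlinarith [sq_nonneg M, mul_le_mul_of_nonneg_left hq (sq_nonneg M)]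
    have hK := hxμ0.const_mul ((1+μ+3*|c|) * M^2)
    rw [mul_zero] at hK
    exact squeeze_zero_norm' hbnd hK
  have hFtop : Tendsto F atTop (nhds 0) := by
    have hbnd : ∀ᶠ x in atTop, ‖F x‖ ≤
        (1+μ+2*|c|) * (x^(μ+1) * (deriv g x)^2 + x^μ * (g x)^2) := by
      filter_upwards [eventually_ge_atTop (1:ℝ)] with x hx1
      have hx0 : (0:ℝ) < x := lt_of_lt_of_le one_pos hx1
      have hp : (0:ℝ) ≤ x^μ := Real.rpow_nonneg hx0.le _
      have hq : x^μ ≤ x^(μ+1) := Real.rpow_le_rpow_of_exponent_le hx1 (by linarith)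
      have hq0 : (0:ℝ) ≤ x^(μ+1) := hp.trans hq
      have hc0 : (0:ℝ) ≤ |c| := abs_nonneg c
      have habscab : |c * (deriv g x * g x)| ≤ |c| * (((deriv g x)^2 + (g x)^2)/2) := by
        rw [abs_mul]
        exact mul_le_mul_of_nonneg_left (habsmul (deriv g x) (g x)) hc0
      obtain ⟨hcab1, hcab2⟩ := abs_le.1 habscab
      have hcgU : c * (g x)^2 ≤ |c| * (g x)^2 :=
        mul_le_mul_of_nonneg_right (le_abs_self c) (sq_nonneg _)
      have hcgL : -(|c| * (g x)^2) ≤ c * (g x)^2 := by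
        have := mul_le_mul_of_nonneg_right (neg_abs_le c) (sq_nonneg (g x))
        linarith
      have e3 : F x = (deriv g x)^2 * x^(μ+1) + μ * ((deriv g x)^2 * x^μ)
          + 2 * (c * (deriv g x * g x) * x^μ) + (c * (g x)^2) * x^μ := by
        simp only [hFdef]; ring
      rw [Real.norm_eq_abs, abs_le]
      constructor
      · rw [e3]
        nlinarith [mul_le_mul_of_nonneg_right hcab1 hp,
          mul_le_mul_of_nonneg_right hcgL hp,
          mul_nonneg (sq_nonneg (deriv g x)) hq0, mul_nonneg (sq_nonneg (g x)) hp,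
          mul_le_mul_of_nonneg_left hq (mul_nonneg hc0 (sq_nonneg (deriv g x))),
          mul_le_mul_of_nonneg_left hq (mul_nonneg hμ.le (sq_nonneg (deriv g x))),
          mul_nonneg hμ.le (mul_nonneg (sq_nonneg (deriv g x)) hq0),
mul_nonneg hc0 (mul_nonneg (sq_nonneg (deriv g x)) hq0),
          mul_nonneg hμ.le (mul_nonneg (sq_nonneg (deriv g x)) hp),
          mul_nonneg hc0 (mul_nonneg (sq_nonneg (g x)) hp),
          mul_nonneg hμ.le (mul_nonneg (sq_nonneg (g x)) hp), hμ.le]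
      · rw [e3]
        nlinarith [mul_le_mul_of_nonneg_right hcab2 hp,
          mul_le_mul_of_nonneg_right hcgU hp,
          mul_nonneg (sq_nonneg (deriv g x)) hq0, mul_nonneg (sq_nonneg (g x)) hp,
          mul_le_mul_of_nonneg_left hq (mul_nonneg hc0 (sq_nonneg (deriv g x))),
          mul_le_mul_of_nonneg_left hq (mul_nonneg hμ.le (sq_nonneg (deriv g x))),
          mul_nonneg hμ.le (mul_nonneg (sq_nonneg (deriv g x)) hq0),
mul_nonneg hc0 (mul_nonneg (sq_nonneg (deriv g x)) hq0),
          mul_nonneg hμ.le (mul_nonneg (sq_nonneg (deriv g x)) hp),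
          mul_nonneg hc0 (mul_nonneg (sq_nonneg (g x)) hp),
          mul_nonneg hμ.le (mul_nonneg (sq_nonneg (g x)) hp), hμ.le]
    have hK := hT.const_mul (1+μ+2*|c|)
    rw [mul_zero] at hK
    exact squeeze_zero_norm' hbnd hK
  have hFTC : ∫ x in Set.Ioi (0:ℝ), Fd x = 0 := ftc_Ioi_zero F Fd hFderiv hFdint hF0 hFtop
  -- pointwise identity
  have hpt : ∀ x ∈ Set.Ioi (0:ℝ),
      (x * deriv (deriv g) x + (x + μ) * deriv g x + c * g x) ^ 2 * x ^ (μ - 1) =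
      (deriv (deriv g) x)^2 * x^(μ+1) + ((x^2 * (deriv g x)^2 - ε * (g x)^2) * x^(μ-1)
        + ((-(s+1)) * ((deriv g x)^2 * x^μ) + Fd x)) := by
    intro x hx
    have hx0 : (0:ℝ) < x := hx
    have hεs : ε = (μ^2 - s^2)/4 := by linarith
    simp only [hFddef]
    rw [e2 x hx0, e1 x hx0, hεs, hcdef, hb]
    ring
  -- assemble
  have hP1i : IntegrableOn (fun x => (x^2 * (deriv g x)^2 - ε * (g x)^2) * x^(μ-1))
      (Set.Ioi 0) volume := by
    refine MeasureTheory.IntegrableOn.congr_fun (hI1.sub (hG2.const_mul ε)) ?_ measurableSet_Ioi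
    intro x hx
    have hx0 : (0:ℝ) < x := hx
    simp only [Pi.sub_apply]
    rw [e2 x hx0]
    ring
  have hI2' : Integrable (fun x => (-(s+1)) * ((deriv g x)^2 * x^μ))
      (volume.restrict (Set.Ioi 0)) := hI2.const_mul _
  rw [MeasureTheory.setIntegral_congr_fun measurableSet_Ioi (fun x hx => hpt x hx)]
  have hs23 : Integrable (fun x => (-(s+1)) * ((deriv g x)^2 * x^μ) + Fd x)
      (volume.restrict (Set.Ioi 0)) := hI2'.add hFdint
  have hs123 : Integrable (fun x => (x^2 * (deriv g x)^2 - ε * (g x)^2) * x^(μ-1)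
      + ((-(s+1)) * ((deriv g x)^2 * x^μ) + Fd x)) (volume.restrict (Set.Ioi 0)) :=
    hP1i.add hs23
  rw [MeasureTheory.integral_add hQ hs123,
      MeasureTheory.integral_add hP1i hs23,
      MeasureTheory.integral_add hI2' hFdint,
      hFTC, MeasureTheory.integral_const_mul]
  unfold Q P1 P0
  ring
end
end

section
/- Let μ > 0 and ε > 0 with ε < μ²/4, and set b = (μ − √(μ²−4ε))/2. Let g : (0,∞) → ℝ be a smooth function satisfying the boundary conditions (B) and having finite D_μ-norm, and suppose equality holds: Q[g] + P₁[g] = (√(μ²−4ε)+1) · P₀[g]. Then g solves the differential equation x g''(x) + (x+μ) g'(x) + (μ−b) g(x) = 0 for all x > 0. -/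
open MeasureTheory Filter

set_option maxHeartbeats 2000000

noncomputable section

section Helpers
open Set

lemma crpow (e : ℝ) : ContinuousOn (fun x : ℝ => x ^ e) (Set.Ioi 0) := by
  intro x hx
  exact (Real.continuousAt_rpow_const x e (Or.inl (ne_of_gt hx))).continuousWithinAt

lemma trpow0 {e : ℝ} (he : 0 < e) :
    Tendsto (fun x : ℝ => x ^ e) (nhdsWithin 0 (Set.Ioi 0)) (nhds 0) := by
  have := (Real.continuousAt_rpow_const 0 e (Or.inr he.le)).tendsto
  rw [Real.zero_rpow (ne_of_gt he)] at this
  exact this.mono_left nhdsWithin_le_nhds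

lemma hasDerivAt_rpow' {x : ℝ} (hx : 0 < x) (e : ℝ) :
    HasDerivAt (fun y : ℝ => y ^ e) (e * x ^ (e - 1)) x :=
  Real.hasDerivAt_rpow_const (Or.inl (ne_of_gt hx))

lemma amgm2 {x : ℝ} (hx : 0 < x) (p q a c : ℝ) :
    |a * c| * x ^ ((p + q) / 2) ≤ (a ^ 2 * x ^ p + c ^ 2 * x ^ q) / 2 := by
  have h1 : x ^ ((p + q) / 2) = x ^ (p / 2) * x ^ (q / 2) := by
    rw [← Real.rpow_add hx]; ring_nf
  have h2 : (x ^ (p / 2)) ^ 2 = x ^ p := by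
    rw [← Real.rpow_natCast (x ^ (p / 2)) 2, ← Real.rpow_mul hx.le]; norm_num
  have h3 : (x ^ (q / 2)) ^ 2 = x ^ q := by
    rw [← Real.rpow_natCast (x ^ (q / 2)) 2, ← Real.rpow_mul hx.le]; norm_num
  have key : ∀ A B : ℝ, 0 ≤ A → 0 ≤ B → A * B ≤ (A ^ 2 + B ^ 2) / 2 := by
    intro A B _ _; nlinarith [sq_nonneg (A - B)]
  have := key (|a| * x ^ (p / 2)) (|c| * x ^ (q / 2))
    (by positivity) (by positivity)
  calc |a * c| * x ^ ((p + q) / 2)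
      = (|a| * x ^ (p / 2)) * (|c| * x ^ (q / 2)) := by
        rw [h1, abs_mul]; ring
    _ ≤ ((|a| * x ^ (p / 2)) ^ 2 + (|c| * x ^ (q / 2)) ^ 2) / 2 := this
    _ = (a ^ 2 * x ^ p + c ^ 2 * x ^ q) / 2 := by
        rw [mul_pow, mul_pow, h2, h3, sq_abs, sq_abs]

/-- FTC on `(0, ∞)` with vanishing limits at both open endpoints. -/
lemma ftc0 (F F' : ℝ → ℝ) (hd : ∀ x ∈ Set.Ioi (0 : ℝ), HasDerivAt F (F' x) x)
    (hi : IntegrableOn F' (Set.Ioi 0) volume)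
    (h0 : Tendsto F (nhdsWithin 0 (Set.Ioi 0)) (nhds 0))
    (htop : Tendsto F atTop (nhds 0)) :
    ∫ x in Set.Ioi (0 : ℝ), F' x = 0 := by
  have hIoi1 : Set.Ioi (1 : ℝ) ⊆ Set.Ioi 0 := fun x hx => show (0:ℝ) < x from lt_trans one_pos hx
  have h1 : ∫ x in Set.Ioi (1 : ℝ), F' x = 0 - F 1 := by
    apply integral_Ioi_of_hasDerivAt_of_tendsto
    · exact (hd 1 (by norm_num)).continuousAt.continuousWithinAt
    · exact fun x hx => hd x (hIoi1 hx)
    · exact hi.mono_set hIoi1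
    · exact htop
  -- the Ioc 0 1 part
  have hiIoc : IntegrableOn F' (Set.Ioc 0 1) volume :=
    hi.mono_set Set.Ioc_subset_Ioi_self
  have hiIcc : IntegrableOn F' (Set.Icc 0 1) volume := by
    rwa [integrableOn_Icc_iff_integrableOn_Ioc]
  have hprim : ContinuousOn (fun a => ∫ t in Set.Ioc (0:ℝ) a, F' t) (Set.Icc 0 1) :=
    intervalIntegral.continuousOn_primitive hiIcc
  have hle : nhdsWithin (0:ℝ) (Set.Ioi 0) ≤ nhdsWithin 0 (Set.Icc 0 1) := by
    rw [← nhdsWithin_Ioo_eq_nhdsGT (one_pos)]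
    exact nhdsWithin_mono 0 Set.Ioo_subset_Icc_self
  have hlim1 : Tendsto (fun a => ∫ t in Set.Ioc (0:ℝ) a, F' t)
      (nhdsWithin 0 (Set.Ioi 0)) (nhds 0) := by
    have := (hprim 0 (by norm_num)).tendsto
    rw [show ∫ t in Set.Ioc (0:ℝ) 0, F' t = 0 by simp] at this
    exact this.mono_left hle
  -- so ∫ over Ioc a 1 tends to ∫ over Ioc 0 1
  have hsplit : ∀ a ∈ Set.Ioo (0:ℝ) 1,
      ∫ t in Set.Ioc a 1, F' t = (∫ t in Set.Ioc (0:ℝ) 1, F' t) - ∫ t in Set.Ioc (0:ℝ) a, F' t := by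
    intro a ha
    have hu : Set.Ioc (0:ℝ) a ∪ Set.Ioc a 1 = Set.Ioc 0 1 :=
      Set.Ioc_union_Ioc_eq_Ioc ha.1.le ha.2.le
    have hdisj : Disjoint (Set.Ioc (0:ℝ) a) (Set.Ioc a 1) := Set.Ioc_disjoint_Ioc_of_le le_rfl
    have := setIntegral_union hdisj measurableSet_Ioc
      (hiIoc.mono_set (by rw [← hu]; exact Set.subset_union_left))
      (hiIoc.mono_set (by rw [← hu]; exact Set.subset_union_right))
    rw [hu] at this
    rw [this]; ring
  have hlim2 : Tendsto (fun a => ∫ t in Set.Ioc a 1, F' t)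
      (nhdsWithin 0 (Set.Ioi 0)) (nhds (∫ t in Set.Ioc (0:ℝ) 1, F' t)) := by
    have h' : Tendsto (fun a => (∫ t in Set.Ioc (0:ℝ) 1, F' t) - ∫ t in Set.Ioc (0:ℝ) a, F' t)
        (nhdsWithin 0 (Set.Ioi 0)) (nhds ((∫ t in Set.Ioc (0:ℝ) 1, F' t) - 0)) :=
      tendsto_const_nhds.sub hlim1
    rw [sub_zero] at h'
    apply h'.congr'
    filter_upwards [Ioo_mem_nhdsGT_of_mem (by norm_num : (0:ℝ) ∈ Set.Ico (0:ℝ) 1)] with a ha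
    exact (hsplit a ha).symm
  -- FTC on [a,1] for a > 0
  have hftc : ∀ a ∈ Set.Ioo (0:ℝ) 1, ∫ t in Set.Ioc a 1, F' t = F 1 - F a := by
    intro a ha
    have hsub : Set.uIcc a 1 ⊆ Set.Ioi 0 := by
      rw [Set.uIcc_of_le ha.2.le]
      exact fun x hx => lt_of_lt_of_le ha.1 hx.1
    have := intervalIntegral.integral_eq_sub_of_hasDerivAt
      (f := F) (f' := F') (a := a) (b := 1)
      (fun x hx => hd x (hsub hx)) ?_
    · rw [← this, intervalIntegral.integral_of_le ha.2.le]
    · rw [intervalIntegrable_iff_integrableOn_Ioc_of_le ha.2.le]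
      exact hi.mono_set (fun x hx => lt_trans ha.1 hx.1)
  have hlim3 : Tendsto (fun a => F 1 - F a) (nhdsWithin 0 (Set.Ioi 0)) (nhds (F 1 - 0)) :=
    tendsto_const_nhds.sub h0
  have h2 : ∫ t in Set.Ioc (0:ℝ) 1, F' t = F 1 := by
    rw [← sub_zero (F 1)]
    refine tendsto_nhds_unique (hlim2.congr' ?_) hlim3
    filter_upwards [Ioo_mem_nhdsGT_of_mem (by norm_num : (0:ℝ) ∈ Set.Ico (0:ℝ) 1)] with a ha
    exact hftc a ha
  -- combine
  have hu : Set.Ioc (0:ℝ) 1 ∪ Set.Ioi 1 = Set.Ioi 0 := Set.Ioc_union_Ioi_eq_Ioi one_pos.le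
  have hdisj : Disjoint (Set.Ioc (0:ℝ) 1) (Set.Ioi 1) := by
    apply Set.disjoint_left.2
    intro x hx hx'
    exact absurd hx.2 (not_le.2 hx')
  have := setIntegral_union hdisj measurableSet_Ioi hiIoc (hi.mono_set hIoi1)
  rw [hu] at this
  rw [this, h1, h2]; ring

lemma prodbound {x : ℝ} (hx : 0 < x) (p q e a c : ℝ) (he : e = (p + q) / 2) :
    ‖2 * a * c * x ^ e‖ ≤ a ^ 2 * x ^ p + c ^ 2 * x ^ q := by
  subst he
  have h := amgm2 hx p q a c
  have hxe : (0:ℝ) ≤ x ^ ((p + q) / 2) := Real.rpow_nonneg hx.le _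
  have h2 : ‖2 * a * c * x ^ ((p + q) / 2)‖ = 2 * (|a * c| * x ^ ((p + q) / 2)) := by
    rw [Real.norm_eq_abs, abs_mul, abs_of_nonneg hxe, show (2:ℝ) * a * c = 2 * (a * c) by ring,
      abs_mul, abs_two]
    ring
  rw [h2]
  linarith

end Helpers

/-- Equality in the additive one-dimensional inequality forces the Kummer-type ODE
`x g'' + (x+μ) g' + (μ−b) g = 0` on `(0,∞)`, where `b = (μ − √(μ²−4ε))/2`. -/
theorem stmt_15 (μ ε : ℝ) (hμ : 0 < μ) (hε : 0 < ε) (hεμ : ε < μ ^ 2 / 4)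
    (b : ℝ) (hb : b = (μ - Real.sqrt (μ ^ 2 - 4 * ε)) / 2)
    (g : ℝ → ℝ) (hg : ContDiffOn ℝ (⊤ : ℕ∞) g (Set.Ioi 0))
    (hB : BoundaryB μ g) (hD : FiniteDmu μ g)
    (heq : Q μ g + P1 μ ε g = (Real.sqrt (μ ^ 2 - 4 * ε) + 1) * P0 μ g) :
    ∀ x : ℝ, 0 < x →
      x * deriv (deriv g) x + (x + μ) * deriv g x + (μ - b) * g x = 0 := by
  -- Notation and basic facts
  obtain ⟨hB1, hB2⟩ := hB
  obtain ⟨iQ, iD1, iw⟩ := hD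
  unfold Q P1 P0 at heq
  have hop : IsOpen (Set.Ioi (0:ℝ)) := isOpen_Ioi
  have hgv : ContDiffOn ℝ (⊤ : ℕ∞) (deriv g) (Set.Ioi 0) :=
    hg.deriv_of_isOpen hop (by exact_mod_cast le_top)
  have hgu : ContDiffOn ℝ (⊤ : ℕ∞) (deriv (deriv g)) (Set.Ioi 0) :=
    hgv.deriv_of_isOpen hop (by exact_mod_cast le_top)
  have cw : ContinuousOn g (Set.Ioi 0) := hg.continuousOn
  have cv : ContinuousOn (deriv g) (Set.Ioi 0) := hgv.continuousOn
  have cu : ContinuousOn (deriv (deriv g)) (Set.Ioi 0) := hgu.continuousOn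
  have hdg : ∀ x ∈ Set.Ioi (0:ℝ), HasDerivAt g (deriv g x) x := fun x hx =>
    ((hg.contDiffAt (hop.mem_nhds hx)).differentiableAt (by simp)).hasDerivAt
  have hdv : ∀ x ∈ Set.Ioi (0:ℝ), HasDerivAt (deriv g) (deriv (deriv g) x) x := fun x hx =>
    ((hgv.contDiffAt (hop.mem_nhds hx)).differentiableAt (by simp)).hasDerivAt
  have hsq : Real.sqrt (μ ^ 2 - 4 * ε) = μ - 2 * b := by rw [hb]; ring
  have hD4 : (0:ℝ) ≤ μ ^ 2 - 4 * ε := by nlinarith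
  have heps : ε = μ * b - b ^ 2 := by
    have h2 := Real.sq_sqrt hD4
    rw [hsq] at h2
    nlinarith
  -- bound near zero
  obtain ⟨M, hM⟩ := hB1
  obtain ⟨δ, hδpos, hMδ⟩ := Metric.mem_nhdsWithin_iff.1 hM
  have hbdd : ∀ x ∈ Set.Ioo (0:ℝ) δ, |g x| ≤ M ∧ |deriv g x| ≤ M := by
    intro x hx
    have hxb : x ∈ Metric.ball (0:ℝ) δ ∩ Set.Ioi 0 := by
      constructor
      · rw [Metric.mem_ball, Real.dist_eq, sub_zero, abs_of_pos hx.1]; exact hx.2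
      · exact hx.1
    have := hMδ hxb
    simp only [Set.mem_setOf_eq] at this
    constructor <;> [linarith [abs_nonneg (deriv g x)]; linarith [abs_nonneg (g x)]]
  have hM0 : 0 ≤ M := by
    have h2 := hbdd (δ/2) ⟨half_pos hδpos, half_lt_self hδpos⟩
    linarith [abs_nonneg (g (δ/2)), h2.1]
  -- tendsto facts at infinity
  have hev1 : ∀ᶠ x : ℝ in atTop, (0:ℝ) ≤ x ^ (μ+1) * (deriv g x) ^ 2 := by
    filter_upwards [eventually_ge_atTop (1:ℝ)] with x hx
    positivity
  have hev2 : ∀ᶠ x : ℝ in atTop, (0:ℝ) ≤ x ^ μ * (g x) ^ 2 := by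
    filter_upwards [eventually_ge_atTop (1:ℝ)] with x hx
    positivity
  have t_v1 : Tendsto (fun x : ℝ => x ^ (μ+1) * (deriv g x) ^ 2) atTop (nhds 0) := by
    apply tendsto_of_tendsto_of_tendsto_of_le_of_le' tendsto_const_nhds hB2 hev1
    filter_upwards [hev2] with x hx; linarith
  have t_w0 : Tendsto (fun x : ℝ => x ^ μ * (g x) ^ 2) atTop (nhds 0) := by
    apply tendsto_of_tendsto_of_tendsto_of_le_of_le' tendsto_const_nhds hB2 hev2
    filter_upwards [hev1] with x hx; linarith
  have t_v0 : Tendsto (fun x : ℝ => x ^ μ * (deriv g x) ^ 2) atTop (nhds 0) := by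
    apply tendsto_of_tendsto_of_tendsto_of_le_of_le' tendsto_const_nhds t_v1
    · filter_upwards [eventually_ge_atTop (1:ℝ)] with x hx
      positivity
    · filter_upwards [eventually_ge_atTop (1:ℝ)] with x hx
      have : x ^ μ ≤ x ^ (μ+1) := Real.rpow_le_rpow_of_exponent_le hx (by linarith)
      nlinarith [sq_nonneg (deriv g x)]
  -- the auxiliary function for integration by parts
  set F : ℝ → ℝ := fun x => (deriv g x)^2 * x^(μ+1) + μ * ((deriv g x)^2 * x^μ)
      + (μ-b) * (((g x)^2 + 2 * deriv g x * g x) * x^μ) with hF_def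
  set F' : ℝ → ℝ := fun x =>
      2 * deriv (deriv g) x * deriv g x * x^(μ+1)
      + (μ+1) * ((deriv g x)^2 * x^μ)
      + μ * (2 * deriv (deriv g) x * deriv g x * x^μ)
      + μ^2 * ((deriv g x)^2 * x^(μ-1))
      + ((μ-b) * (2 * deriv g x * g x * x^μ)
      + (μ-b) * (2 * deriv (deriv g) x * g x * x^μ)
      + (μ-b) * 2 * ((deriv g x)^2 * x^μ)
      + (μ-b) * μ * ((g x)^2 * x^(μ-1))
      + (μ-b) * μ * (2 * deriv g x * g x * x^(μ-1))) with hF'_def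
  have hdF : ∀ x ∈ Set.Ioi (0:ℝ), HasDerivAt F (F' x) x := by
    intro x hx
    have hx0 : (0:ℝ) < x := hx
    have hd1 : HasDerivAt (fun y : ℝ => y ^ (μ+1)) ((μ+1) * x ^ μ) x := by
      simpa [add_sub_cancel_right] using hasDerivAt_rpow' hx0 (μ+1)
    have hd0 : HasDerivAt (fun y : ℝ => y ^ μ) (μ * x ^ (μ-1)) x := hasDerivAt_rpow' hx0 μ
    have hv2 : HasDerivAt (fun y => (deriv g y)^2)
        (2 * deriv g x ^ 1 * deriv (deriv g) x) x := (hdv x hx).pow 2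
    have hw2 : HasDerivAt (fun y => (g y)^2) (2 * g x ^ 1 * deriv g x) x := (hdg x hx).pow 2
    have hvw : HasDerivAt (fun y => 2 * deriv g y * g y)
        ((2 * deriv (deriv g) x) * g x + (2 * deriv g x) * deriv g x) x :=
      ((hdv x hx).const_mul 2).mul (hdg x hx)
    have hinner : HasDerivAt (fun y => (g y)^2 + 2 * deriv g y * g y)
        ((2 * g x ^ 1 * deriv g x) + ((2 * deriv (deriv g) x) * g x
          + (2 * deriv g x) * deriv g x)) x := hw2.add hvw
    have H := ((hv2.mul hd1).add ((hv2.mul hd0).const_mul μ)).add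
      ((hinner.mul hd0).const_mul (μ-b))
    refine H.congr_deriv ?_
    simp only [hF'_def, pow_one]
    ring
  -- integrability of all the pieces
  have asm : ∀ f : ℝ → ℝ, ContinuousOn f (Set.Ioi 0) →
      AEStronglyMeasurable f (volume.restrict (Set.Ioi 0)) := fun f hf =>
    hf.aestronglyMeasurable measurableSet_Ioi
  have iA : IntegrableOn (fun x => (deriv g x)^2 * x^(μ+1)) (Set.Ioi 0) volume := by
    apply Integrable.mono' iD1 (asm _ ((cv.pow 2).mul (crpow _)))
    rw [ae_restrict_iff' measurableSet_Ioi]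
    refine ae_of_all _ fun x hx => ?_
    have hx0 : (0:ℝ) < x := hx
    have h1 : x ^ (μ+1) = x ^ μ * x := by rw [Real.rpow_add hx0, Real.rpow_one]
    simp only [Pi.mul_apply, Pi.pow_apply]
    rw [Real.norm_eq_abs, abs_of_nonneg (by positivity), h1]
    nlinarith [sq_nonneg (deriv g x), Real.rpow_nonneg hx0.le μ]
  have iB : IntegrableOn (fun x => (deriv g x)^2 * x^μ) (Set.Ioi 0) volume := by
    apply Integrable.mono' iD1 (asm _ ((cv.pow 2).mul (crpow _)))
    rw [ae_restrict_iff' measurableSet_Ioi]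
    refine ae_of_all _ fun x hx => ?_
    have hx0 : (0:ℝ) < x := hx
    simp only [Pi.mul_apply, Pi.pow_apply]
    rw [Real.norm_eq_abs, abs_of_nonneg (by positivity)]
    nlinarith [mul_nonneg (mul_nonneg (sq_nonneg (deriv g x)) hx0.le)
      (Real.rpow_nonneg hx0.le μ)]
  have iC : IntegrableOn (fun x => (deriv g x)^2 * x^(μ-1)) (Set.Ioi 0) volume := by
    have hsplit : Set.Ioi (0:ℝ) ⊆ Set.Ioo 0 δ ∪ Set.Ici δ := by
      intro x hx
      rcases lt_or_ge x δ with h | h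
      · exact Or.inl ⟨hx, h⟩
      · exact Or.inr h
    apply IntegrableOn.mono_set _ hsplit
    apply IntegrableOn.union
    · -- near zero : bounded by M^2 * x^(μ-1)
      have irb : IntegrableOn (fun x : ℝ => M^2 * x^(μ-1)) (Set.Ioo 0 δ) volume := by
        have h0 : IntegrableOn (fun x : ℝ => x^(μ-1)) (Set.Ioo 0 δ) volume :=
          (intervalIntegral.integrableOn_Ioo_rpow_iff hδpos).2 (by linarith)
        exact h0.const_mul _
      apply Integrable.mono' irb
        (AEStronglyMeasurable.mono_set (fun x hx => hx.1) (asm _ ((cv.pow 2).mul (crpow _))))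
      rw [ae_restrict_iff' measurableSet_Ioo]
      refine ae_of_all _ fun x hx => ?_
      have hx0 : (0:ℝ) < x := hx.1
      simp only [Pi.mul_apply, Pi.pow_apply]
      rw [Real.norm_eq_abs, abs_of_nonneg (by positivity)]
      have hv := (hbdd x hx).2
      have h4 : (0:ℝ) ≤ x ^ (μ-1) := Real.rpow_nonneg hx0.le _
      have h5 : (deriv g x)^2 ≤ M^2 := by
        nlinarith [sq_abs (deriv g x), abs_nonneg (deriv g x)]
      exact mul_le_mul_of_nonneg_right h5 h4
    · -- away from zero
      have h1 : IntegrableOn (fun x => δ⁻¹ * ((deriv g x)^2 * x^μ)) (Set.Ici δ) volume :=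
        (iB.mono_set (fun x hx => lt_of_lt_of_le hδpos hx)).const_mul _
      apply Integrable.mono' h1 (AEStronglyMeasurable.mono_set
        (fun x hx => lt_of_lt_of_le hδpos hx) (asm _ ((cv.pow 2).mul (crpow _))))
      rw [ae_restrict_iff' measurableSet_Ici]
      refine ae_of_all _ fun x hx => ?_
      have hx0 : (0:ℝ) < x := lt_of_lt_of_le hδpos hx
      have h2 : x ^ (μ-1) = x ^ μ * x⁻¹ := by
        rw [Real.rpow_sub hx0, Real.rpow_one]; rfl
      have h3 : x⁻¹ ≤ δ⁻¹ := by
        apply inv_anti₀ hδpos hx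
      simp only [Pi.mul_apply, Pi.pow_apply]
      rw [Real.norm_eq_abs, abs_of_nonneg (by positivity), h2]
      have h4 : (0:ℝ) ≤ x ^ μ := Real.rpow_nonneg hx0.le μ
      nlinarith [sq_nonneg (deriv g x), mul_nonneg (sq_nonneg (deriv g x)) h4]
  -- mixed product integrands
  have mkj : ∀ (a c : ℝ → ℝ), ContinuousOn a (Set.Ioi 0) → ContinuousOn c (Set.Ioi 0) →
      ∀ (p q e : ℝ), e = (p + q) / 2 →
      IntegrableOn (fun x => a x ^ 2 * x ^ p) (Set.Ioi 0) volume →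
      IntegrableOn (fun x => c x ^ 2 * x ^ q) (Set.Ioi 0) volume →
      IntegrableOn (fun x => 2 * a x * c x * x ^ e) (Set.Ioi 0) volume := by
    intro a c ha hc p q e he hia hic
    apply Integrable.mono' (hia.add hic)
      (asm _ (((continuousOn_const.mul ha).mul hc).mul (crpow _)))
    rw [ae_restrict_iff' measurableSet_Ioi]
    refine ae_of_all _ fun x hx => ?_
    exact prodbound hx p q e (a x) (c x) he
  have j1 : IntegrableOn (fun x => 2 * deriv (deriv g) x * deriv g x * x^(μ+1))
      (Set.Ioi 0) volume := mkj _ _ cu cv (μ+1) (μ+1) (μ+1) (by ring) iQ iA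
  have j2 : IntegrableOn (fun x => 2 * deriv (deriv g) x * deriv g x * x^μ)
      (Set.Ioi 0) volume := mkj _ _ cu cv (μ+1) (μ-1) μ (by ring) iQ iC
  have j3 : IntegrableOn (fun x => 2 * deriv (deriv g) x * g x * x^μ)
      (Set.Ioi 0) volume := mkj _ _ cu cw (μ+1) (μ-1) μ (by ring) iQ iw
  have j4 : IntegrableOn (fun x => 2 * deriv g x * g x * x^μ)
      (Set.Ioi 0) volume := mkj _ _ cv cw (μ+1) (μ-1) μ (by ring) iA iw
  have j5 : IntegrableOn (fun x => 2 * deriv g x * g x * x^(μ-1))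
      (Set.Ioi 0) volume := mkj _ _ cv cw (μ-1) (μ-1) (μ-1) (by ring) iC iw
  have iF' : IntegrableOn F' (Set.Ioi 0) volume := by
    rw [hF'_def]
    exact ((((j1.add (iB.const_mul (μ+1))).add (j2.const_mul μ)).add
      (iC.const_mul (μ^2))).add
      (((((j4.const_mul (μ-b)).add (j3.const_mul (μ-b))).add
        (iB.const_mul ((μ-b)*2))).add (iw.const_mul ((μ-b)*μ))).add
        (j5.const_mul ((μ-b)*μ))))
  -- limit of F at infinity
  have htopF : Tendsto F atTop (nhds 0) := by
    have a1 : Tendsto (fun x : ℝ => (deriv g x)^2 * x^(μ+1)) atTop (nhds 0) :=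
      t_v1.congr fun x => by ring
    have a2 : Tendsto (fun x : ℝ => μ * ((deriv g x)^2 * x^μ)) atTop (nhds 0) := by
      have := (t_v0.const_mul μ)
      rw [mul_zero] at this
      exact this.congr fun x => by ring
    have a3w : Tendsto (fun x : ℝ => (g x)^2 * x^μ) atTop (nhds 0) :=
      t_w0.congr fun x => by ring
    have a3vw : Tendsto (fun x : ℝ => 2 * deriv g x * g x * x^μ) atTop (nhds 0) := by
      apply squeeze_zero_norm' (a := fun x : ℝ =>
        x ^ μ * (deriv g x)^2 + x ^ μ * (g x)^2)
      · filter_upwards [eventually_ge_atTop (1:ℝ)] with x hx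
        have hx0 : (0:ℝ) < x := lt_of_lt_of_le one_pos hx
        have := prodbound hx0 μ μ μ (deriv g x) (g x) (by ring)
        calc ‖2 * deriv g x * g x * x ^ μ‖
            ≤ (deriv g x)^2 * x^μ + (g x)^2 * x^μ := this
          _ = x ^ μ * (deriv g x)^2 + x ^ μ * (g x)^2 := by ring
      · have := t_v0.add t_w0
        rwa [add_zero] at this
    have a3 : Tendsto (fun x : ℝ =>
        (μ-b) * (((g x)^2 + 2 * deriv g x * g x) * x^μ)) atTop (nhds 0) := by
      have h := (a3w.add a3vw).const_mul (μ-b)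
      rw [add_zero, mul_zero] at h
      exact h.congr fun x => by ring
    have := (a1.add a2).add a3
    rw [add_zero, add_zero] at this
    exact this
  -- limit of F at zero
  have h0F : Tendsto F (nhdsWithin 0 (Set.Ioi 0)) (nhds 0) := by
    apply squeeze_zero_norm' (a := fun x : ℝ =>
      M^2 * x^(μ+1) + (μ * M^2 * x^μ + |μ-b| * 3 * M^2 * x^μ))
    · filter_upwards [Ioo_mem_nhdsGT_of_mem
        (⟨le_refl 0, hδpos⟩ : (0:ℝ) ∈ Set.Ico 0 δ)] with x hx
      have hx0 : (0:ℝ) < x := hx.1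
      obtain ⟨hgb, hvb⟩ := hbdd x hx
      have hp1 : (0:ℝ) ≤ x ^ (μ+1) := Real.rpow_nonneg hx0.le _
      have hp0 : (0:ℝ) ≤ x ^ μ := Real.rpow_nonneg hx0.le _
      have hv2 : (deriv g x)^2 ≤ M^2 := by
        nlinarith [sq_abs (deriv g x), abs_nonneg (deriv g x)]
      have hw2 : (g x)^2 ≤ M^2 := by
        nlinarith [sq_abs (g x), abs_nonneg (g x)]
      have hvw : |2 * deriv g x * g x| ≤ 2 * M^2 := by
        rw [show (2:ℝ) * deriv g x * g x = 2 * (deriv g x * g x) by ring, abs_mul, abs_two,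
          abs_mul]
        nlinarith [abs_nonneg (deriv g x), abs_nonneg (g x)]
      have e1 : ‖(deriv g x)^2 * x^(μ+1)‖ ≤ M^2 * x^(μ+1) := by
        rw [Real.norm_eq_abs, abs_of_nonneg (by positivity)]
        exact mul_le_mul_of_nonneg_right hv2 hp1
      have e2 : ‖μ * ((deriv g x)^2 * x^μ)‖ ≤ μ * M^2 * x^μ := by
        rw [Real.norm_eq_abs, abs_of_nonneg (by positivity)]
        nlinarith [mul_le_mul_of_nonneg_right hv2 hp0]
      have e3 : ‖(μ-b) * (((g x)^2 + 2 * deriv g x * g x) * x^μ)‖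
          ≤ |μ-b| * 3 * M^2 * x^μ := by
        rw [Real.norm_eq_abs, abs_mul, abs_mul, abs_of_nonneg hp0]
        have hin : |(g x)^2 + 2 * deriv g x * g x| ≤ 3 * M^2 := by
          calc |(g x)^2 + 2 * deriv g x * g x| ≤ |(g x)^2| + |2 * deriv g x * g x| :=
                abs_add_le _ _
            _ ≤ 3 * M^2 := by rw [abs_of_nonneg (sq_nonneg _)]; linarith
        nlinarith [abs_nonneg (μ-b), mul_le_mul_of_nonneg_right hin hp0,
          mul_le_mul_of_nonneg_left (mul_le_mul_of_nonneg_right hin hp0) (abs_nonneg (μ-b))]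
      calc ‖F x‖ ≤ ‖(deriv g x)^2 * x^(μ+1) + μ * ((deriv g x)^2 * x^μ)‖
            + ‖(μ-b) * (((g x)^2 + 2 * deriv g x * g x) * x^μ)‖ := norm_add_le _ _
        _ ≤ (‖(deriv g x)^2 * x^(μ+1)‖ + ‖μ * ((deriv g x)^2 * x^μ)‖)
            + ‖(μ-b) * (((g x)^2 + 2 * deriv g x * g x) * x^μ)‖ := by
              gcongr; exact norm_add_le _ _
        _ ≤ M^2 * x^(μ+1) + (μ * M^2 * x^μ + |μ-b| * 3 * M^2 * x^μ) := by
              linarith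
    · have hμ1 : (0:ℝ) < μ + 1 := by linarith
      have := ((trpow0 hμ1).const_mul (M^2)).add
        (((trpow0 hμ).const_mul (μ * M^2)).add ((trpow0 hμ).const_mul (|μ-b| * 3 * M^2)))
      simp only [mul_zero, add_zero] at this
      exact this
  -- the integration-by-parts identity
  have hIBP : ∫ x in Set.Ioi (0:ℝ), F' x = 0 := ftc0 F F' hdF iF' h0F htopF
  -- the pointwise algebraic identity
  set h : ℝ → ℝ := fun x =>
      (x * deriv (deriv g) x + (x + μ) * deriv g x + (μ - b) * g x)^2 * x^(μ-1) with hh_def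
  set T : ℝ → ℝ := fun x => (deriv (deriv g) x)^2 * x^(μ+1)
      + (x^2 * (deriv g x)^2 - ε * (g x)^2) * x^(μ-1)
      - (Real.sqrt (μ^2 - 4*ε) + 1) * ((deriv g x)^2 * x^μ) with hT_def
  have hkey : Set.EqOn h (fun x => T x + F' x) (Set.Ioi 0) := by
    intro x hx
    have hx0 : (0:ℝ) < x := hx
    have e0 : x ^ μ = x^(μ-1) * x := by
      rw [← Real.rpow_add_one (ne_of_gt hx0) (μ-1), sub_add_cancel]
    have e1 : x ^ (μ+1) = x^(μ-1) * x * x := by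
      rw [Real.rpow_add_one (ne_of_gt hx0) μ, e0]
    simp only [hh_def, hT_def, hF'_def]
    rw [hsq]
    rw [heps]
    rw [e1, e0]
    ring
  -- integrability of the main integrand
  have iP1' : IntegrableOn (fun x => (x^2 * (deriv g x)^2 - ε * (g x)^2) * x^(μ-1))
      (Set.Ioi 0) volume := by
    have base : IntegrableOn
        (fun x => (deriv g x)^2 * x^(μ+1) - ε * ((g x)^2 * x^(μ-1))) (Set.Ioi 0) volume :=
      iA.sub (iw.const_mul ε)
    apply IntegrableOn.congr_fun base _ measurableSet_Ioi
    intro x hx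
    dsimp only
    have hx0 : (0:ℝ) < x := hx
    have e0 : x ^ μ = x^(μ-1) * x := by
      rw [← Real.rpow_add_one (ne_of_gt hx0) (μ-1), sub_add_cancel]
    have e1 : x ^ (μ+1) = x^(μ-1) * x * x := by
      rw [Real.rpow_add_one (ne_of_gt hx0) μ, e0]
    rw [e1]
    ring
  have iT : IntegrableOn T (Set.Ioi 0) volume := by
    rw [hT_def]
    exact (iQ.add iP1').sub (iB.const_mul (Real.sqrt (μ^2 - 4*ε) + 1))
  have ih : IntegrableOn h (Set.Ioi 0) volume :=
    IntegrableOn.congr_fun (iT.add iF') hkey.symm measurableSet_Ioi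
  -- the main integral vanishes
  have hintT : ∫ x in Set.Ioi (0:ℝ), T x = 0 := by
    have step0 : ∫ x in Set.Ioi (0:ℝ), T x = ∫ x in Set.Ioi (0:ℝ),
        ((deriv (deriv g) x)^2 * x^(μ+1)
          + (x^2 * (deriv g x)^2 - ε * (g x)^2) * x^(μ-1)
          - (Real.sqrt (μ^2 - 4*ε) + 1) * ((deriv g x)^2 * x^μ)) := by
      rw [hT_def]
    have iQP : IntegrableOn (fun x => (deriv (deriv g) x)^2 * x^(μ+1)
        + (x^2 * (deriv g x)^2 - ε * (g x)^2) * x^(μ-1)) (Set.Ioi 0) volume := iQ.add iP1'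
    rw [step0, integral_sub iQP (iB.const_mul (Real.sqrt (μ^2 - 4*ε) + 1)),
      integral_add iQ iP1', integral_const_mul]
    linarith [heq]
  have hinth : ∫ x in Set.Ioi (0:ℝ), h x = 0 := by
    have step1 : ∫ x in Set.Ioi (0:ℝ), h x = ∫ x in Set.Ioi (0:ℝ), (T x + F' x) :=
      setIntegral_congr_fun measurableSet_Ioi hkey
    rw [step1, integral_add iT iF', hintT, hIBP, add_zero]
  -- nonnegativity gives a.e. vanishing
  have hnn0 : ∀ᵐ x ∂(volume.restrict (Set.Ioi 0)), 0 ≤ h x := by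
    rw [ae_restrict_iff' measurableSet_Ioi]
    refine ae_of_all _ fun x hx => ?_
    simp only [hh_def]
    exact mul_nonneg (sq_nonneg _) (Real.rpow_nonneg (le_of_lt hx) _)
  have hnn : 0 ≤ᵐ[volume.restrict (Set.Ioi 0)] h := hnn0
  have hae : h =ᵐ[volume.restrict (Set.Ioi 0)] 0 :=
    (integral_eq_zero_iff_of_nonneg_ae hnn ih).1 hinth
  have hae0 : ∀ᵐ x ∂volume, x ∈ Set.Ioi (0:ℝ) → h x = 0 := by
    rw [← ae_restrict_iff' measurableSet_Ioi]
    exact hae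
  rw [ae_iff] at hae0
  -- conclusion by continuity
  intro x₀ hx₀
  by_contra hne
  have hL : h x₀ ≠ 0 := by
    simp only [hh_def]
    intro h0
    rcases mul_eq_zero.1 h0 with h1 | h2
    · exact hne ((pow_eq_zero_iff (two_ne_zero)).1 h1)
    · exact absurd h2 (ne_of_gt (Real.rpow_pos_of_pos hx₀ _))
  have hcont : ContinuousAt h x₀ := by
    simp only [hh_def]
    apply ContinuousAt.mul
    · apply ContinuousAt.pow
      apply ContinuousAt.add
      apply ContinuousAt.add
      · exact continuousAt_id.mul (cu.continuousAt (hop.mem_nhds hx₀))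
      · exact (continuousAt_id.add continuousAt_const).mul
          (cv.continuousAt (hop.mem_nhds hx₀))
      · exact continuousAt_const.mul (cw.continuousAt (hop.mem_nhds hx₀))
    · exact (Real.continuousAt_rpow_const x₀ _ (Or.inl (ne_of_gt hx₀)))
  have hev : ∀ᶠ x in nhds x₀, h x ≠ 0 := hcont.eventually_ne hL
  have hev2 : ∀ᶠ x in nhds x₀, x ∈ Set.Ioi (0:ℝ) := hop.eventually_mem hx₀
  have hev3 : ∀ᶠ x in nhds x₀, ¬(x ∈ Set.Ioi (0:ℝ) → h x = 0) := by
    filter_upwards [hev, hev2] with y h1 h2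
    exact fun himp => h1 (himp h2)
  obtain ⟨r, hr, hball⟩ := Metric.eventually_nhds_iff.1 hev3
  have hsub : Metric.ball x₀ r ⊆ {x | ¬(x ∈ Set.Ioi (0:ℝ) → h x = 0)} :=
    fun y hy => hball (Metric.mem_ball.1 hy)
  have h0 : volume (Metric.ball x₀ r) = 0 := measure_mono_null hsub hae0
  exact absurd h0 (ne_of_gt (Metric.measure_ball_pos volume x₀ hr))
end
end
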